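/- arXiv:2406.05890 — 2 statements merged into one kernel-verified Lean document; each statement's English description precedes it below -/
import Mathlib

section
/- Let p ≥ 3 be a prime and let ℚ_p(√d) be the unramified quadratic extension of ℚ_p. Suppose λ ∈ U^0(√d) is not a root of unity, let l be the order of λ modulo p, and let k = ν_p(λ^l − 1). Then the closure in ℚ_p(√d) of {λ^n : n ∈ ℕ} (the closed subgroup of U^0(√d) generated by λ) equals the disjoint union ⨆_{i=0}^{l−1} ( (λ^i + p^k·ℤ_p[√d]) ∩ U^0(√d) ). In particular, if l = 2(p+1) and k = 1, then this closure equals all of U^0(√d). -/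
theorem aux14_mem_span_iff (p : ℕ) [Fact p.Prime] (x : ℤ_[p]) :
    PadicInt.toZMod x = 0 ↔ ‖x‖ ≤ (p : ℝ)⁻¹ := by
  constructor
  · intro h
    have : x ∈ Ideal.span {(p : ℤ_[p]) ^ 1} := by
      rw [pow_one, ← PadicInt.maximalIdeal_eq_span_p, ← PadicInt.ker_toZMod]
      exact h
    have := (PadicInt.norm_le_pow_iff_mem_span_pow x 1).mpr this
    simpa using this
  · intro h
    have : x ∈ Ideal.span {(p : ℤ_[p]) ^ 1} := by
      rw [← PadicInt.norm_le_pow_iff_mem_span_pow]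
      simpa using h
    rw [pow_one, ← PadicInt.maximalIdeal_eq_span_p, ← PadicInt.ker_toZMod] at this
    exact this

open Polynomial in
theorem aux14_not_sq_mod (p : ℕ) [Fact p.Prime] (hp : 3 ≤ p)
    (D : ℤ_[p]) (hd : ‖D‖ = 1) (hdns : ¬ ∃ y : ℚ_[p], y ^ 2 = (D : ℚ_[p])) :
    ∀ c : ZMod p, c ^ 2 ≠ PadicInt.toZMod D := by
  intro c hc
  set t : ℤ_[p] := ((c.val : ℕ) : ℤ_[p]) with ht
  have htz : PadicInt.toZMod t = c := by
    rw [ht, map_natCast, ZMod.natCast_rightInverse c]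
  have hplt : (1 : ℝ) < p := by exact_mod_cast lt_of_lt_of_le (by norm_num) hp
  have hinvlt : (p : ℝ)⁻¹ < 1 := inv_lt_one_of_one_lt₀ hplt
  have hnorm1 : ‖t ^ 2 - D‖ ≤ (p : ℝ)⁻¹ := by
    rw [← aux14_mem_span_iff, map_sub, map_pow, htz, hc, sub_self]
  have h2 : ‖(2 : ℤ_[p])‖ = 1 := by
    have hnd : ¬ ((p : ℤ) ∣ (2 : ℤ)) := by
      intro h; have := Int.le_of_dvd (by norm_num) h; omega
    have hlt := (PadicInt.norm_int_lt_one_iff_dvd (2 : ℤ)).not.mpr hnd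
    have hle : ‖((2 : ℤ) : ℤ_[p])‖ ≤ 1 := PadicInt.norm_le_one _
    have h22 : ((2 : ℤ) : ℤ_[p]) = (2 : ℤ_[p]) := by norm_cast
    rw [h22] at hlt hle
    exact le_antisymm hle (not_lt.mp hlt)
  have hc0 : c ≠ 0 := by
    intro h
    rw [h] at hc
    have hD0 : PadicInt.toZMod D = 0 := by rw [← hc]; ring
    have := (aux14_mem_span_iff p D).mp hD0
    rw [hd] at this
    exact absurd (lt_of_le_of_lt this hinvlt) (lt_irrefl _)
  have htnorm : ‖t‖ = 1 := by
    rcases lt_or_eq_of_le (PadicInt.norm_le_one t) with h | h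
    · exfalso
      have h1 : (p : ℤ_[p]) ∣ t := (PadicInt.norm_lt_one_iff_dvd t).mp h
      have h2' : t ∈ Ideal.span {(p : ℤ_[p])} := Ideal.mem_span_singleton.mpr h1
      have h3 : PadicInt.toZMod t = 0 := by
        rw [← PadicInt.maximalIdeal_eq_span_p] at h2'
        rw [← PadicInt.ker_toZMod] at h2'
        exact h2'
      rw [htz] at h3
      exact hc0 h3
    · exact h
  set F : Polynomial ℤ_[p] := X ^ 2 - C D with hF
  have hevals : F.eval t = t ^ 2 - D := by simp [hF]
  have hevald : F.derivative.eval t = 2 * t := by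
    rw [hF]
    simp [derivative_pow]
    try ring
  have hnd : ‖F.derivative.eval t‖ = 1 := by
    rw [hevald, norm_mul, h2, htnorm]; norm_num
  have hhyp : ‖F.eval t‖ < ‖F.derivative.eval t‖ ^ 2 := by
    rw [hnd, hevals, one_pow]
    exact lt_of_le_of_lt hnorm1 hinvlt
  obtain ⟨z, hz, -⟩ := hensels_lemma hhyp
  rw [hF] at hz
  simp at hz
  apply hdns
  refine ⟨(z : ℚ_[p]), ?_⟩
  have : z ^ 2 = D := by
    have := sub_eq_zero.mp hz
    linear_combination this
  exact_mod_cast congrArg (fun x : ℤ_[p] => (x : ℚ_[p])) this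

theorem aux14_qdisc (p : ℕ) [Fact p.Prime] (x : ℚ_[p]) (h : ‖x‖ < 1) : ‖x‖ ≤ (p:ℝ)⁻¹ := by
  have := (Padic.norm_le_pow_iff_norm_lt_pow_add_one x (-1)).mpr (by simpa using h)
  simpa using this

theorem aux14_qnorm (p : ℕ) [Fact p.Prime] (hp : 3 ≤ p)
    (d : ℚ_[p]) (hd : ‖d‖ = 1) (hdns : ¬ ∃ y : ℚ_[p], y ^ 2 = d) :
    ∀ u v : ℚ_[p], ‖u ^ 2 - d * v ^ 2‖ = max ‖u‖ ‖v‖ ^ 2 := by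
  have key : ∀ t : ℚ_[p], ‖t‖ = 1 → ‖t ^ 2 - d‖ = 1 := by
    intro t ht
    have hle : ‖t ^ 2 - d‖ ≤ 1 := by
      have := Padic.nonarchimedean (t ^ 2) (-d)
      simp only [norm_neg, ← sub_eq_add_neg] at this
      refine le_trans this ?_
      simp [norm_pow, ht, hd]
    rcases lt_or_eq_of_le hle with hlt | heq
    · exfalso
      have hsmall : ‖t ^ 2 - d‖ ≤ (p:ℝ)⁻¹ := aux14_qdisc p _ hlt
      set T : ℤ_[p] := ⟨t, ht.le⟩ with hT
      set D : ℤ_[p] := ⟨d, hd.le⟩ with hD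
      have hsub : ‖T ^ 2 - D‖ ≤ (p:ℝ)⁻¹ := by
        have : ((T ^ 2 - D : ℤ_[p]) : ℚ_[p]) = t ^ 2 - d := by
          push_cast [hT, hD]; rfl
        rw [← PadicInt.padic_norm_e_of_padicInt, this]
        exact hsmall
      have h0 : PadicInt.toZMod (T ^ 2 - D) = 0 := by
        rw [aux14_mem_span_iff]; exact hsub
      have : (PadicInt.toZMod T) ^ 2 = PadicInt.toZMod D := by
        rw [map_sub, map_pow] at h0
        exact sub_eq_zero.mp h0
      exact aux14_not_sq_mod p hp D hd hdns _ this
    · exact heq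
  intro u v
  rcases eq_or_ne ‖u‖ ‖v‖ with heq | hne
  · rcases eq_or_ne v 0 with rfl | hv
    · have : u = 0 := by rwa [norm_zero, norm_eq_zero] at heq
      simp [this]
    · have hv0 : ‖v‖ ≠ 0 := norm_ne_zero_iff.mpr hv
      have ht : ‖u / v‖ = 1 := by
        rw [norm_div, heq, div_self hv0]
      have hfact : u ^ 2 - d * v ^ 2 = v ^ 2 * ((u / v) ^ 2 - d) := by
        field_simp
      rw [hfact, norm_mul, key _ ht, mul_one, norm_pow, heq, max_self]
  · have h2 : ‖u ^ 2‖ ≠ ‖-(d * v ^ 2)‖ := by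
      rw [norm_neg, norm_mul, hd, one_mul, norm_pow, norm_pow]
      intro h
      exact hne (by
        have hu := norm_nonneg u; have hv := norm_nonneg v
        nlinarith [sq_abs ‖u‖])
    have := Padic.add_eq_max_of_ne h2
    rw [← sub_eq_add_neg] at this
    rw [this, norm_neg, norm_mul, hd, one_mul, norm_pow, norm_pow]
    rcases le_total ‖u‖ ‖v‖ with h | h
    · rw [max_eq_right h, sup_eq_right.mpr (by nlinarith [norm_nonneg u, norm_nonneg v])]
    · rw [max_eq_left h, sup_eq_left.mpr (by nlinarith [norm_nonneg u, norm_nonneg v])]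

theorem aux14_dom {K : Type} [NormedField K]
    (hna : ∀ x y : K, ‖x + y‖ ≤ max ‖x‖ ‖y‖) (a b : K) (h : ‖b‖ < ‖a‖) :
    ‖a + b‖ = ‖a‖ := by
  have h1 : ‖a + b‖ ≤ ‖a‖ := le_trans (hna a b) (by simp [h.le])
  rcases lt_or_eq_of_le h1 with hlt | heq
  · exfalso
    have : ‖a‖ ≤ max ‖a + b‖ ‖b‖ := by
      have := hna (a + b) (-b)
      simpa using this
    rcases max_cases ‖a + b‖ ‖b‖ with ⟨he, -⟩ | ⟨he, -⟩ <;> rw [he] at this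
    · exact absurd (lt_of_le_of_lt this hlt) (lt_irrefl _)
    · exact absurd (lt_of_le_of_lt this h) (lt_irrefl _)
  · exact heq

theorem aux14_sum_le {K : Type} [NormedField K]
    (hna : ∀ x y : K, ‖x + y‖ ≤ max ‖x‖ ‖y‖) (s : Finset ℕ) (f : ℕ → K) (c : ℝ)
    (hc : 0 ≤ c) (h : ∀ i ∈ s, ‖f i‖ ≤ c) : ‖∑ i ∈ s, f i‖ ≤ c := by
  classical
  induction s using Finset.induction_on with
  | empty => simpa using hc
  | @insert a s' hx ih =>
    rw [Finset.sum_insert hx]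
    refine le_trans (hna _ _) (max_le (h a (by simp)) (ih fun i hi => h i (by simp [hi])))

theorem aux14_sqnorm (p : ℕ) [Fact p.Prime] {K : Type} [NormedField K] [Algebra ℚ_[p] K]
    (hiso : ∀ x : ℚ_[p], ‖algebraMap ℚ_[p] K x‖ = ‖x‖)
    (d : ℚ_[p]) (hd : ‖d‖ = 1) (sq : K) (hsq : sq ^ 2 = algebraMap ℚ_[p] K d) :
    ‖sq‖ = 1 := by
  have h1 : ‖sq‖ ^ 2 = 1 := by
    rw [← norm_pow, hsq, hiso, hd]
  nlinarith [norm_nonneg sq]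

theorem aux14_coordnorm (p : ℕ) [Fact p.Prime] (hp : 3 ≤ p) {K : Type} [NormedField K]
    [Algebra ℚ_[p] K]
    (hiso : ∀ x : ℚ_[p], ‖algebraMap ℚ_[p] K x‖ = ‖x‖)
    (hna : ∀ x y : K, ‖x + y‖ ≤ max ‖x‖ ‖y‖)
    (d : ℚ_[p]) (hd : ‖d‖ = 1) (hdns : ¬ ∃ y : ℚ_[p], y ^ 2 = d)
    (sq : K) (hsq : sq ^ 2 = algebraMap ℚ_[p] K d) :
    ∀ u v : ℚ_[p], ‖algebraMap ℚ_[p] K u + algebraMap ℚ_[p] K v * sq‖ = max ‖u‖ ‖v‖ := by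
  intro u v
  have hsqn : ‖sq‖ = 1 := aux14_sqnorm p hiso d hd sq hsq
  set x : K := algebraMap ℚ_[p] K u + algebraMap ℚ_[p] K v * sq with hx
  set y : K := algebraMap ℚ_[p] K u - algebraMap ℚ_[p] K v * sq with hy
  have hxy : x * y = algebraMap ℚ_[p] K (u ^ 2 - d * v ^ 2) := by
    have h1 : x * y = (algebraMap ℚ_[p] K u) ^ 2 - (algebraMap ℚ_[p] K v) ^ 2 * sq ^ 2 := by
      rw [hx, hy]; ring
    rw [h1, hsq, map_sub, map_pow, map_mul, map_pow]
    ring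
  have hprod : ‖x‖ * ‖y‖ = max ‖u‖ ‖v‖ ^ 2 := by
    rw [← norm_mul, hxy, hiso, aux14_qnorm p hp d hd hdns u v]
  have hxle : ‖x‖ ≤ max ‖u‖ ‖v‖ := by
    refine le_trans (hna _ _) ?_
    rw [norm_mul, hiso, hiso, hsqn, mul_one]
  have hyle : ‖y‖ ≤ max ‖u‖ ‖v‖ := by
    rw [hy, sub_eq_add_neg]
    refine le_trans (hna _ _) ?_
    rw [norm_neg, norm_mul, hiso, hiso, hsqn, mul_one]
  have hmnn : 0 ≤ max ‖u‖ ‖v‖ := le_max_of_le_left (norm_nonneg u)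
  rcases eq_or_lt_of_le hmnn with h0 | h0
  · have : ‖x‖ ≤ 0 := by rw [← h0] at hxle; exact hxle
    have h2 : (0:ℝ) ≤ ‖x‖ := norm_nonneg x
    rw [← h0]
    linarith
  · refine le_antisymm hxle ?_
    by_contra hlt
    push_neg at hlt
    have hyn : 0 ≤ ‖y‖ := norm_nonneg y
    have h1 : ‖x‖ * ‖y‖ ≤ ‖x‖ * (max ‖u‖ ‖v‖) := mul_le_mul_of_nonneg_left hyle (norm_nonneg x)
    have h2 : ‖x‖ * (max ‖u‖ ‖v‖) < (max ‖u‖ ‖v‖) * (max ‖u‖ ‖v‖) :=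
      mul_lt_mul_of_pos_right hlt h0
    nlinarith

theorem aux14_two (p : ℕ) [Fact p.Prime] (hp : 3 ≤ p) : ‖(2 : ℚ_[p])‖ = 1 := by
  have hnd : ¬ ((p : ℤ) ∣ (2 : ℤ)) := by
    intro h; have := Int.le_of_dvd (by norm_num) h; omega
  have hlt := (Padic.norm_intCast_lt_one_iff (k := (2 : ℤ))).not.mpr hnd
  have hle : ‖((2 : ℤ) : ℚ_[p])‖ ≤ 1 := Padic.norm_int_le_one _
  have h22 : ((2 : ℤ) : ℚ_[p]) = (2 : ℚ_[p]) := by norm_cast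
  rw [h22] at hlt hle
  exact le_antisymm hle (not_lt.mp hlt)

theorem aux14_natnorm (p : ℕ) [Fact p.Prime] (n : ℕ) : ‖((n : ℕ) : ℚ_[p])‖ ≤ 1 := by
  have h : ((n : ℤ) : ℚ_[p]) = ((n : ℕ) : ℚ_[p]) := by norm_cast
  rw [← h]
  exact Padic.norm_int_le_one _

theorem aux14_natnormK (p : ℕ) [Fact p.Prime] {K : Type} [NormedField K] [Algebra ℚ_[p] K]
    (hiso : ∀ x : ℚ_[p], ‖algebraMap ℚ_[p] K x‖ = ‖x‖) (n : ℕ) : ‖((n : ℕ) : K)‖ ≤ 1 := by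
  have h : ((n : ℕ) : K) = algebraMap ℚ_[p] K ((n : ℕ) : ℚ_[p]) := by
    rw [map_natCast]
  rw [h, hiso]
  exact aux14_natnorm p n

theorem aux14_coord_unique (p : ℕ) [Fact p.Prime] (hp : 3 ≤ p) {K : Type} [NormedField K]
    [Algebra ℚ_[p] K]
    (hiso : ∀ x : ℚ_[p], ‖algebraMap ℚ_[p] K x‖ = ‖x‖)
    (hna : ∀ x y : K, ‖x + y‖ ≤ max ‖x‖ ‖y‖)
    (d : ℚ_[p]) (hd : ‖d‖ = 1) (hdns : ¬ ∃ y : ℚ_[p], y ^ 2 = d)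
    (sq : K) (hsq : sq ^ 2 = algebraMap ℚ_[p] K d)
    {u v u' v' : ℚ_[p]}
    (h : algebraMap ℚ_[p] K u + algebraMap ℚ_[p] K v * sq
       = algebraMap ℚ_[p] K u' + algebraMap ℚ_[p] K v' * sq) :
    u = u' ∧ v = v' := by
  have h0 : algebraMap ℚ_[p] K (u - u') + algebraMap ℚ_[p] K (v - v') * sq = 0 := by
    rw [map_sub, map_sub]
    linear_combination h
  have h1 := aux14_coordnorm p hp hiso hna d hd hdns sq hsq (u - u') (v - v')
  rw [h0, norm_zero] at h1
  have h2 : ‖u - u'‖ = 0 ∧ ‖v - v'‖ = 0 := by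
    constructor
    · have := le_max_left ‖u - u'‖ ‖v - v'‖
      have h3 := norm_nonneg (u - u')
      linarith [h1.symm.le.trans (le_refl (0:ℝ))]
    · have := le_max_right ‖u - u'‖ ‖v - v'‖
      have h3 := norm_nonneg (v - v')
      linarith [h1.symm.le.trans (le_refl (0:ℝ))]
  exact ⟨sub_eq_zero.mp (norm_eq_zero.mp h2.1), sub_eq_zero.mp (norm_eq_zero.mp h2.2)⟩

theorem aux14_Nm_mul (p : ℕ) [Fact p.Prime] {K : Type} [NormedField K] [Algebra ℚ_[p] K]
    (d : ℚ_[p]) (sq : K) (hsq : sq ^ 2 = algebraMap ℚ_[p] K d)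
    (hspan : ∀ x : K, ∃ u v : ℚ_[p], x = algebraMap ℚ_[p] K u + algebraMap ℚ_[p] K v * sq)
    (Nm : K → ℚ_[p])
    (hNm : ∀ u v : ℚ_[p],
      Nm (algebraMap ℚ_[p] K u + algebraMap ℚ_[p] K v * sq) = u ^ 2 - d * v ^ 2) :
    ∀ x y : K, Nm (x * y) = Nm x * Nm y := by
  intro x y
  obtain ⟨u1, v1, h1⟩ := hspan x
  obtain ⟨u2, v2, h2⟩ := hspan y
  have hxy : x * y = algebraMap ℚ_[p] K (u1 * u2 + d * (v1 * v2))
      + algebraMap ℚ_[p] K (u1 * v2 + u2 * v1) * sq := by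
    rw [h1, h2]
    simp only [map_add, map_mul]
    rw [← hsq]
    ring
  rw [hxy, hNm, h1, h2, hNm, hNm]
  ring

theorem aux14_Nm_one (p : ℕ) [Fact p.Prime] {K : Type} [NormedField K] [Algebra ℚ_[p] K]
    (d : ℚ_[p]) (sq : K)
    (Nm : K → ℚ_[p])
    (hNm : ∀ u v : ℚ_[p],
      Nm (algebraMap ℚ_[p] K u + algebraMap ℚ_[p] K v * sq) = u ^ 2 - d * v ^ 2) :
    Nm 1 = 1 := by
  have h : (1 : K) = algebraMap ℚ_[p] K 1 + algebraMap ℚ_[p] K 0 * sq := by simp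
  rw [h, hNm]
  ring

theorem aux14_Nm_pow (p : ℕ) [Fact p.Prime] {K : Type} [NormedField K] [Algebra ℚ_[p] K]
    (d : ℚ_[p]) (sq : K) (hsq : sq ^ 2 = algebraMap ℚ_[p] K d)
    (hspan : ∀ x : K, ∃ u v : ℚ_[p], x = algebraMap ℚ_[p] K u + algebraMap ℚ_[p] K v * sq)
    (Nm : K → ℚ_[p])
    (hNm : ∀ u v : ℚ_[p],
      Nm (algebraMap ℚ_[p] K u + algebraMap ℚ_[p] K v * sq) = u ^ 2 - d * v ^ 2) :
    ∀ (x : K) (n : ℕ), Nm (x ^ n) = (Nm x) ^ n := by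
  intro x n
  induction n with
  | zero => simpa using aux14_Nm_one p d sq Nm hNm
  | succ n ih =>
    rw [pow_succ, pow_succ, aux14_Nm_mul p d sq hsq hspan Nm hNm, ih]

theorem aux14_norm1 (p : ℕ) [Fact p.Prime] (hp : 3 ≤ p) {K : Type} [NormedField K]
    [Algebra ℚ_[p] K]
    (hiso : ∀ x : ℚ_[p], ‖algebraMap ℚ_[p] K x‖ = ‖x‖)
    (hna : ∀ x y : K, ‖x + y‖ ≤ max ‖x‖ ‖y‖)
    (d : ℚ_[p]) (hd : ‖d‖ = 1) (hdns : ¬ ∃ y : ℚ_[p], y ^ 2 = d)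
    (sq : K) (hsq : sq ^ 2 = algebraMap ℚ_[p] K d)
    (Nm : K → ℚ_[p])
    (hNm : ∀ u v : ℚ_[p],
      Nm (algebraMap ℚ_[p] K u + algebraMap ℚ_[p] K v * sq) = u ^ 2 - d * v ^ 2)
    (w : K) (u v : ℚ_[p])
    (hw : w = algebraMap ℚ_[p] K u + algebraMap ℚ_[p] K v * sq)
    (hsmall : ‖w - 1‖ ≤ (p : ℝ)⁻¹) :
    max ‖u - 1‖ ‖v‖ = ‖w - 1‖ ∧ (Nm w = 1 → ‖u - 1‖ = ‖v‖ ^ 2) := by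
  have hP : (1:ℝ) < p := by exact_mod_cast lt_of_lt_of_le (by norm_num) hp
  have hw1 : w - 1 = algebraMap ℚ_[p] K (u - 1) + algebraMap ℚ_[p] K v * sq := by
    rw [hw, map_sub, map_one]; ring
  have hcoord := aux14_coordnorm p hp hiso hna d hd hdns sq hsq (u - 1) v
  rw [← hw1] at hcoord
  refine ⟨hcoord.symm, ?_⟩
  intro hN
  rw [hw, hNm] at hN
  have hfac : (u - 1) * (u + 1) = d * v ^ 2 := by linear_combination hN
  have hu1 : ‖u - 1‖ ≤ (p:ℝ)⁻¹ := le_trans (le_trans (le_max_left _ _) hcoord.symm.le) hsmall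
  have h2 : ‖(2 : ℚ_[p])‖ = 1 := aux14_two p hp
  have hne : ‖(2 : ℚ_[p])‖ ≠ ‖u - 1‖ := by
    rw [h2]
    intro hcontra
    rw [← hcontra] at hu1
    have := inv_lt_one_of_one_lt₀ hP
    linarith
  have hup1 : ‖u + 1‖ = 1 := by
    have : u + 1 = 2 + (u - 1) := by ring
    rw [this, Padic.add_eq_max_of_ne hne, h2]
    have hle : ‖u - 1‖ ≤ 1 := le_trans hu1 (inv_lt_one_of_one_lt₀ hP).le
    exact max_eq_left hle
  have := congrArg norm hfac
  rw [norm_mul, norm_mul, norm_pow, hup1, hd, mul_one, one_mul] at this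
  exact this

theorem aux14_nm_pm1 (p : ℕ) [Fact p.Prime] (hp : 3 ≤ p) {K : Type} [NormedField K]
    [Algebra ℚ_[p] K]
    (hiso : ∀ x : ℚ_[p], ‖algebraMap ℚ_[p] K x‖ = ‖x‖)
    (hna : ∀ x y : K, ‖x + y‖ ≤ max ‖x‖ ‖y‖)
    (d : ℚ_[p]) (hd : ‖d‖ = 1) (hdns : ¬ ∃ y : ℚ_[p], y ^ 2 = d)
    (sq : K) (hsq : sq ^ 2 = algebraMap ℚ_[p] K d)
    (hspan : ∀ x : K, ∃ u v : ℚ_[p], x = algebraMap ℚ_[p] K u + algebraMap ℚ_[p] K v * sq)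
    (Nm : K → ℚ_[p])
    (hNm : ∀ u v : ℚ_[p],
      Nm (algebraMap ℚ_[p] K u + algebraMap ℚ_[p] K v * sq) = u ^ 2 - d * v ^ 2)
    (w : K) (hpm : Nm w = 1 ∨ Nm w = -1)
    (hsmall : ‖w - 1‖ ≤ (p : ℝ)⁻¹) :
    Nm w = 1 := by
  have hP : (1:ℝ) < p := by exact_mod_cast lt_of_lt_of_le (by norm_num) hp
  have hinv : (p:ℝ)⁻¹ < 1 := inv_lt_one_of_one_lt₀ hP
  obtain ⟨u, v, hw⟩ := hspan w
  have hw1 : w - 1 = algebraMap ℚ_[p] K (u - 1) + algebraMap ℚ_[p] K v * sq := by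
    rw [hw, map_sub, map_one]; ring
  have hcoord := aux14_coordnorm p hp hiso hna d hd hdns sq hsq (u - 1) v
  rw [← hw1] at hcoord
  have hu1 : ‖u - 1‖ ≤ (p:ℝ)⁻¹ := le_trans (le_trans (le_max_left _ _) hcoord.ge) hsmall
  have hv : ‖v‖ ≤ (p:ℝ)⁻¹ := le_trans (le_trans (le_max_right _ _) hcoord.ge) hsmall
  have hu : ‖u‖ ≤ 1 := by
    have : u = 1 + (u - 1) := by ring
    rw [this]
    refine le_trans (Padic.nonarchimedean _ _) (max_le (by simp) (le_trans hu1 hinv.le))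
  have hup1 : ‖u + 1‖ ≤ 1 := by
    refine le_trans (Padic.nonarchimedean _ _) (max_le hu (by simp))
  have hid : Nm w - 1 = (u - 1) * (u + 1) - d * v ^ 2 := by
    rw [hw, hNm]; ring
  have hnm : ‖Nm w - 1‖ ≤ (p:ℝ)⁻¹ := by
    rw [hid, sub_eq_add_neg]
    refine le_trans (Padic.nonarchimedean _ _) (max_le ?_ ?_)
    · rw [norm_mul]
      calc ‖u - 1‖ * ‖u + 1‖ ≤ ‖u - 1‖ * 1 := by
            exact mul_le_mul_of_nonneg_left hup1 (norm_nonneg _)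
        _ ≤ (p:ℝ)⁻¹ := by rwa [mul_one]
    · rw [norm_neg, norm_mul, hd, one_mul, norm_pow]
      calc ‖v‖ ^ 2 ≤ ‖v‖ * 1 := by
            nlinarith [norm_nonneg v, hv, hinv]
        _ ≤ (p:ℝ)⁻¹ := by rwa [mul_one]
  rcases hpm with h | h
  · exact h
  · exfalso
    rw [h] at hnm
    have : ‖(-1 : ℚ_[p]) - 1‖ = ‖(2:ℚ_[p])‖ := by
      norm_num
    rw [this, aux14_two p hp] at hnm
    linarith

theorem aux14_pnormK (p : ℕ) [Fact p.Prime] {K : Type} [NormedField K] [Algebra ℚ_[p] K]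
    (hiso : ∀ x : ℚ_[p], ‖algebraMap ℚ_[p] K x‖ = ‖x‖) :
    ‖((p : ℕ) : K)‖ = (p : ℝ)⁻¹ := by
  have h : ((p : ℕ) : K) = algebraMap ℚ_[p] K ((p : ℕ) : ℚ_[p]) := by rw [map_natCast]
  rw [h, hiso, Padic.norm_p]

theorem aux14_pow_p (p : ℕ) [Fact p.Prime] (hp : 3 ≤ p) {K : Type} [NormedField K]
    [Algebra ℚ_[p] K]
    (hiso : ∀ x : ℚ_[p], ‖algebraMap ℚ_[p] K x‖ = ‖x‖)
    (hna : ∀ x y : K, ‖x + y‖ ≤ max ‖x‖ ‖y‖)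
    (x : K) (m : ℕ) (hm : 1 ≤ m) (hx : ‖x - 1‖ = (p : ℝ) ^ (-(m:ℤ))) :
    ‖x ^ p - 1‖ = (p : ℝ) ^ (-(m:ℤ) - 1) := by
  have hP : (1:ℝ) < p := by exact_mod_cast lt_of_lt_of_le (by norm_num) hp
  have hP0 : (0:ℝ) < p := lt_trans one_pos hP
  set y : K := x - 1 with hy
  have hxp : x ^ p = ∑ i ∈ Finset.range (p + 1), y ^ i * 1 ^ (p - i) * (p.choose i : K) := by
    have := add_pow y (1:K) p
    rw [← this]
    rw [hy]
    ring_nf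
  have hsplit : x ^ p - 1 = y * (p : K)
      + ∑ i ∈ Finset.Ico 2 (p + 1), y ^ i * (p.choose i : K) := by
    rw [hxp, Finset.range_eq_Ico, Finset.sum_eq_sum_Ico_succ_bot (by omega),
      Finset.sum_eq_sum_Ico_succ_bot (by omega : (1:ℕ) < p + 1)]
    simp only [pow_zero, one_pow, one_mul, mul_one, Nat.choose_zero_right, Nat.cast_one,
      Nat.choose_one_right, pow_one]
    ring
  have hmain : ‖y * (p : K)‖ = (p : ℝ) ^ (-(m:ℤ) - 1) := by
    rw [norm_mul, hx, aux14_pnormK p hiso, ← zpow_neg_one, ← zpow_add₀ hP0.ne']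
    congr 1
  have hynorm : ∀ i : ℕ, ‖y ^ i‖ = (p:ℝ) ^ (-(m:ℤ) * i) := by
    intro i
    rw [norm_pow, hx, ← zpow_natCast ((p:ℝ) ^ (-(m:ℤ))) i, ← zpow_mul]
  have htail : ‖∑ i ∈ Finset.Ico 2 (p + 1), y ^ i * (p.choose i : K)‖
      ≤ (p : ℝ) ^ (-(m:ℤ) - 2) := by
    refine aux14_sum_le hna _ _ _ (by positivity) ?_
    intro i hi
    simp only [Finset.mem_Ico] at hi
    rcases eq_or_ne i p with rfl | hip
    · rw [norm_mul, Nat.choose_self, Nat.cast_one, norm_one, mul_one, hynorm]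
      apply zpow_le_zpow_right₀ hP.le
      have h3 : (m:ℤ) * 3 ≤ (m:ℤ) * i := by
        apply mul_le_mul_of_nonneg_left _ (by exact_mod_cast Nat.zero_le m)
        exact_mod_cast hp
      have hm' : (1:ℤ) ≤ (m:ℤ) := by exact_mod_cast hm
      linarith
    · have hilt : i < p := by omega
      obtain ⟨c', hc'⟩ := (Fact.out : p.Prime).dvd_choose_self (by omega) hilt
      have hcn : ‖(p.choose i : K)‖ ≤ (p:ℝ)⁻¹ := by
        rw [hc']
        push_cast
        rw [norm_mul, aux14_pnormK p hiso]
        calc (p:ℝ)⁻¹ * ‖(c' : K)‖ ≤ (p:ℝ)⁻¹ * 1 :=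
              mul_le_mul_of_nonneg_left (aux14_natnormK p hiso c') (by positivity)
          _ = (p:ℝ)⁻¹ := mul_one _
      rw [norm_mul]
      calc ‖y ^ i‖ * ‖(p.choose i : K)‖ ≤ (p:ℝ) ^ (-(m:ℤ) * 2) * (p:ℝ)⁻¹ := by
            refine mul_le_mul ?_ hcn (norm_nonneg _) (by positivity)
            rw [hynorm]
            apply zpow_le_zpow_right₀ hP.le
            have h2 : (2:ℤ) ≤ (i:ℤ) := by exact_mod_cast hi.1
            have hm0 : (0:ℤ) ≤ (m:ℤ) := by positivity
            nlinarith
        _ ≤ (p:ℝ) ^ (-(m:ℤ) - 2) := by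
            rw [← zpow_neg_one, ← zpow_add₀ hP0.ne']
            apply zpow_le_zpow_right₀ hP.le
            have hm' : (1:ℤ) ≤ (m:ℤ) := by exact_mod_cast hm
            linarith
  rw [hsplit, aux14_dom hna _ _ ?_, hmain]
  rw [hmain]
  refine lt_of_le_of_lt htail ?_
  apply zpow_lt_zpow_right₀ hP
  omega

theorem aux14_E (p : ℕ) [Fact p.Prime] {K : Type} [NormedField K]
    (hna : ∀ x y : K, ‖x + y‖ ≤ max ‖x‖ ‖y‖)
    (hnat : ∀ n : ℕ, ‖((n : ℕ) : K)‖ ≤ 1)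
    (μ : K) (hμ : ‖μ‖ ≤ 1) (c : ℕ) :
    ‖μ ^ c - 1 - (c : K) * (μ - 1)‖ ≤ ‖μ - 1‖ ^ 2 := by
  induction c with
  | zero => simpa using sq_nonneg ‖μ - 1‖
  | succ c ih =>
    have hid : μ ^ (c+1) - 1 - ((c+1 : ℕ) : K) * (μ - 1)
        = μ * (μ ^ c - 1 - (c : K) * (μ - 1)) + (c : K) * (μ - 1) ^ 2 := by
      push_cast
      ring
    rw [hid]
    refine le_trans (hna _ _) (max_le ?_ ?_)
    · rw [norm_mul]
      calc ‖μ‖ * ‖μ ^ c - 1 - (c : K) * (μ - 1)‖ ≤ 1 * ‖μ - 1‖ ^ 2 :=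
            mul_le_mul hμ ih (norm_nonneg _) zero_le_one
        _ = ‖μ - 1‖ ^ 2 := one_mul _
    · rw [norm_mul, norm_pow]
      calc ‖(c : K)‖ * ‖μ - 1‖ ^ 2 ≤ 1 * ‖μ - 1‖ ^ 2 :=
            mul_le_mul_of_nonneg_right (hnat c) (by positivity)
        _ = ‖μ - 1‖ ^ 2 := one_mul _

theorem aux14_step (p : ℕ) [Fact p.Prime] (hp : 3 ≤ p) {K : Type} [NormedField K]
    [Algebra ℚ_[p] K]
    (hiso : ∀ x : ℚ_[p], ‖algebraMap ℚ_[p] K x‖ = ‖x‖)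
    (hna : ∀ x y : K, ‖x + y‖ ≤ max ‖x‖ ‖y‖)
    (d : ℚ_[p]) (hd : ‖d‖ = 1) (hdns : ¬ ∃ y : ℚ_[p], y ^ 2 = d)
    (sq : K) (hsq : sq ^ 2 = algebraMap ℚ_[p] K d)
    (hspan : ∀ x : K, ∃ u v : ℚ_[p], x = algebraMap ℚ_[p] K u + algebraMap ℚ_[p] K v * sq)
    (Nm : K → ℚ_[p])
    (hNm : ∀ u v : ℚ_[p],
      Nm (algebraMap ℚ_[p] K u + algebraMap ℚ_[p] K v * sq) = u ^ 2 - d * v ^ 2)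
    (w μ : K) (m : ℕ) (hm : 1 ≤ m) (hNw : Nm w = 1) (hNμ : Nm μ = 1)
    (hw : ‖w - 1‖ ≤ (p:ℝ) ^ (-(m:ℤ))) (hμ : ‖μ - 1‖ = (p:ℝ) ^ (-(m:ℤ))) :
    ∃ c : ℕ, ‖w - μ ^ c‖ ≤ (p:ℝ) ^ (-(m:ℤ) - 1) := by
  have hP : (1:ℝ) < p := by exact_mod_cast lt_of_lt_of_le (by norm_num) hp
  have hP0 : (0:ℝ) < p := lt_trans one_pos hP
  have hpm_le_inv : (p:ℝ) ^ (-(m:ℤ)) ≤ (p:ℝ)⁻¹ := by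
    rw [← zpow_neg_one]
    apply zpow_le_zpow_right₀ hP.le
    omega
  have hinv_le_one : (p:ℝ)⁻¹ ≤ 1 := (inv_lt_one_of_one_lt₀ hP).le
  have hsq2 : ((p:ℝ) ^ (-(m:ℤ))) ^ 2 = (p:ℝ) ^ (-(m:ℤ) * 2) := by
    rw [← zpow_natCast ((p:ℝ) ^ (-(m:ℤ))) 2, ← zpow_mul]
    norm_num
  have h2m : (p:ℝ) ^ (-(m:ℤ) * 2) ≤ (p:ℝ) ^ (-(m:ℤ) - 1) := by
    apply zpow_le_zpow_right₀ hP.le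
    have : (1:ℤ) ≤ (m:ℤ) := by exact_mod_cast hm
    linarith
  obtain ⟨u, v, hwc⟩ := hspan w
  obtain ⟨s, t, hmc⟩ := hspan μ
  obtain ⟨hmaxw, hu1f⟩ := aux14_norm1 p hp hiso hna d hd hdns sq hsq Nm hNm w u v hwc
    (le_trans hw hpm_le_inv)
  obtain ⟨hmaxμ, hs1f⟩ := aux14_norm1 p hp hiso hna d hd hdns sq hsq Nm hNm μ s t hmc
    (le_trans hμ.le hpm_le_inv)
  have hu1 : ‖u - 1‖ = ‖v‖ ^ 2 := hu1f hNw
  have hs1 : ‖s - 1‖ = ‖t‖ ^ 2 := hs1f hNμ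
  have hv : ‖v‖ ≤ (p:ℝ) ^ (-(m:ℤ)) := le_trans (le_trans (le_max_right _ _) hmaxw.le) hw
  have ht_le : ‖t‖ ≤ (p:ℝ) ^ (-(m:ℤ)) := by
    rw [← hμ]
    exact le_trans (le_max_right _ _) hmaxμ.le
  have ht : ‖t‖ = (p:ℝ) ^ (-(m:ℤ)) := by
    rcases lt_or_eq_of_le ht_le with hlt | heq
    · exfalso
      have ht1 : ‖t‖ ≤ 1 := le_trans ht_le (le_trans hpm_le_inv hinv_le_one)
      have h1 : ‖s - 1‖ < (p:ℝ) ^ (-(m:ℤ)) := by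
        rw [hs1]
        nlinarith [norm_nonneg t]
      have := max_lt h1 hlt
      rw [hmaxμ, hμ] at this
      exact lt_irrefl _ this
    · exact heq
  have hpm_pos : (0:ℝ) < (p:ℝ) ^ (-(m:ℤ)) := by positivity
  have ht0 : t ≠ 0 := by
    intro h
    rw [h, norm_zero] at ht
    exact absurd ht.symm (ne_of_gt hpm_pos)
  have hvt : ‖v / t‖ ≤ 1 := by
    rw [norm_div, ht]
    exact div_le_one_of_le₀ hv (by positivity)
  set R : ℤ_[p] := ⟨v / t, hvt⟩ with hR
  set c : ℕ := (PadicInt.toZMod R).val with hc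
  have hres : PadicInt.toZMod (R - ((c:ℕ) : ℤ_[p])) = 0 := by
    rw [map_sub, map_natCast, hc, ZMod.natCast_rightInverse, sub_self]
  have hRc : ‖R - ((c:ℕ) : ℤ_[p])‖ ≤ (p:ℝ)⁻¹ := (aux14_mem_span_iff p _).mp hres
  have hrc : ‖v / t - ((c:ℕ) : ℚ_[p])‖ ≤ (p:ℝ)⁻¹ := by
    have hcast : ((R - ((c:ℕ) : ℤ_[p]) : ℤ_[p]) : ℚ_[p]) = v / t - ((c:ℕ) : ℚ_[p]) := by
      push_cast [hR]
      rfl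
    rw [← hcast, PadicInt.padic_norm_e_of_padicInt]
    exact hRc
  have hvc : ‖v - ((c:ℕ) : ℚ_[p]) * t‖ ≤ (p:ℝ) ^ (-(m:ℤ) - 1) := by
    have hfac : v - ((c:ℕ) : ℚ_[p]) * t = t * (v / t - ((c:ℕ) : ℚ_[p])) := by
      field_simp
    rw [hfac, norm_mul, ht]
    calc (p:ℝ) ^ (-(m:ℤ)) * ‖v / t - ((c:ℕ) : ℚ_[p])‖ ≤ (p:ℝ) ^ (-(m:ℤ)) * (p:ℝ)⁻¹ :=
          mul_le_mul_of_nonneg_left hrc hpm_pos.le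
      _ = (p:ℝ) ^ (-(m:ℤ) - 1) := by
          rw [← zpow_neg_one, ← zpow_add₀ hP0.ne']
          congr 1
  refine ⟨c, ?_⟩
  set A : K := w - 1 - ((c:ℕ) : K) * (μ - 1) with hA
  have hAc : A = algebraMap ℚ_[p] K (u - 1 - ((c:ℕ) : ℚ_[p]) * (s - 1))
      + algebraMap ℚ_[p] K (v - ((c:ℕ) : ℚ_[p]) * t) * sq := by
    rw [hA, hwc, hmc]
    simp only [map_sub, map_mul, map_one, map_natCast]
    ring
  have hAnorm : ‖A‖ ≤ (p:ℝ) ^ (-(m:ℤ) - 1) := by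
    rw [hAc, aux14_coordnorm p hp hiso hna d hd hdns sq hsq]
    refine max_le ?_ hvc
    have hcq : ‖((c:ℕ) : ℚ_[p])‖ ≤ 1 := aux14_natnorm p c
    have h1 : ‖u - 1‖ ≤ (p:ℝ) ^ (-(m:ℤ) * 2) := by
      rw [hu1, ← hsq2]
      nlinarith [norm_nonneg v]
    have h2 : ‖((c:ℕ) : ℚ_[p]) * (s - 1)‖ ≤ (p:ℝ) ^ (-(m:ℤ) * 2) := by
      rw [norm_mul, hs1, ht, hsq2]
      calc ‖((c:ℕ) : ℚ_[p])‖ * (p:ℝ) ^ (-(m:ℤ) * 2) ≤ 1 * (p:ℝ) ^ (-(m:ℤ) * 2) :=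
            mul_le_mul_of_nonneg_right hcq (by positivity)
        _ = (p:ℝ) ^ (-(m:ℤ) * 2) := one_mul _
    have h3 := Padic.nonarchimedean (u - 1) (-(((c:ℕ) : ℚ_[p]) * (s - 1)))
    rw [← sub_eq_add_neg, norm_neg] at h3
    exact le_trans h3 (le_trans (max_le h1 h2) h2m)
  have hμle : ‖μ‖ ≤ 1 := by
    have h : μ = 1 + (μ - 1) := by ring
    rw [h]
    refine le_trans (hna _ _) (max_le (by simp) ?_)
    rw [hμ]
    exact le_trans hpm_le_inv hinv_le_one
  have hB := aux14_E p hna (aux14_natnormK p hiso) μ hμle c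
  have hBnorm : ‖μ ^ c - 1 - ((c:ℕ) : K) * (μ - 1)‖ ≤ (p:ℝ) ^ (-(m:ℤ) - 1) := by
    refine le_trans hB ?_
    rw [hμ, hsq2]
    exact h2m
  have hfinal : w - μ ^ c = A - (μ ^ c - 1 - ((c:ℕ) : K) * (μ - 1)) := by
    rw [hA]; ring
  rw [hfinal, sub_eq_add_neg]
  refine le_trans (hna _ _) (max_le hAnorm ?_)
  rw [norm_neg]
  exact hBnorm

open Polynomial in
theorem aux14_part3 (p : ℕ) [Fact p.Prime] (hp : 3 ≤ p) {K : Type} [NormedField K]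
    [Algebra ℚ_[p] K]
    (hiso : ∀ x : ℚ_[p], ‖algebraMap ℚ_[p] K x‖ = ‖x‖)
    (hna : ∀ x y : K, ‖x + y‖ ≤ max ‖x‖ ‖y‖)
    (d : ℚ_[p]) (hd : ‖d‖ = 1) (hdns : ¬ ∃ y : ℚ_[p], y ^ 2 = d)
    (sq : K) (hsq : sq ^ 2 = algebraMap ℚ_[p] K d)
    (hspan : ∀ x : K, ∃ u v : ℚ_[p], x = algebraMap ℚ_[p] K u + algebraMap ℚ_[p] K v * sq)
    (Nm : K → ℚ_[p])
    (hNm : ∀ u v : ℚ_[p],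
      Nm (algebraMap ℚ_[p] K u + algebraMap ℚ_[p] K v * sq) = u ^ 2 - d * v ^ 2)
    (lam : K) (hlamn : ‖lam‖ = 1)
    (hNl : ∀ i : ℕ, Nm (lam ^ i) = 1 ∨ Nm (lam ^ i) = -1)
    (l : ℕ) (hl2 : l = 2 * (p + 1))
    (hdist : ∀ i j : ℕ, i < l → j < l → ‖lam ^ i - lam ^ j‖ ≤ (p:ℝ)⁻¹ → i = j)
    (z : K) (hz1 : ‖z‖ = 1) (hzN : Nm z = 1 ∨ Nm z = -1) :
    ∃ i, i < l ∧ ‖z - lam ^ i‖ ≤ (p:ℝ)⁻¹ := by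
  classical
  have hprime : p.Prime := Fact.out
  have hP : (1:ℝ) < p := by exact_mod_cast lt_of_lt_of_le (by norm_num) hp
  set D : ℤ_[p] := ⟨d, hd.le⟩ with hD
  set db : ZMod p := PadicInt.toZMod D with hdb
  have hns : ∀ c : ZMod p, c ^ 2 ≠ db := aux14_not_sq_mod p hp D hd hdns
  have hirr : Irreducible (X ^ 2 - C db) :=
    X_pow_sub_C_irreducible_of_prime Nat.prime_two (fun b => hns b)
  haveI : Fact (Irreducible (X ^ 2 - C db)) := ⟨hirr⟩
  set F := AdjoinRoot (X ^ 2 - C db) with hF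
  set θ : F := AdjoinRoot.root _ with hθ
  set of : ZMod p →+* F := AdjoinRoot.of _ with hof
  have hθ2 : θ ^ 2 = of db := by
    have h0 : AdjoinRoot.mk (X ^ 2 - C db) (X ^ 2 - C db) = 0 := AdjoinRoot.mk_self
    rw [map_sub, map_pow, AdjoinRoot.mk_X, AdjoinRoot.mk_C] at h0
    exact sub_eq_zero.mp h0
  have hofinj : Function.Injective of := of.injective
  have hindep : ∀ a b : ZMod p, of a + of b * θ = 0 → a = 0 ∧ b = 0 := by
    intro a b h
    by_cases hb : b = 0
    · subst hb
      simp only [map_zero, zero_mul, add_zero] at h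
      exact ⟨hofinj (by rw [h, map_zero]), rfl⟩
    · exfalso
      have hbne : of b ≠ 0 := fun hh => hb (hofinj (by rw [hh, map_zero]))
      have hθeq : θ = - of a / of b :=
        (eq_div_iff hbne).mpr (by linear_combination h)
      apply hns (-a * b⁻¹)
      apply hofinj
      rw [map_pow, map_mul, map_neg, map_inv₀, ← div_eq_mul_inv, ← hθeq, hθ2]
  have hcoords : ∀ x : K, ∃ q : ℚ_[p] × ℚ_[p],
      x = algebraMap ℚ_[p] K q.1 + algebraMap ℚ_[p] K q.2 * sq := by
    intro x
    obtain ⟨u, v, h⟩ := hspan x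
    exact ⟨(u, v), h⟩
  set co : K → ℚ_[p] × ℚ_[p] := fun x => Classical.choose (hcoords x) with hco
  have hcospec : ∀ x : K,
      x = algebraMap ℚ_[p] K (co x).1 + algebraMap ℚ_[p] K (co x).2 * sq :=
    fun x => Classical.choose_spec (hcoords x)
  have hconorm : ∀ x : K, max ‖(co x).1‖ ‖(co x).2‖ = ‖x‖ := by
    intro x
    rw [← aux14_coordnorm p hp hiso hna d hd hdns sq hsq (co x).1 (co x).2, ← hcospec]
  have hco1 : ∀ x : K, ‖x‖ ≤ 1 → ‖(co x).1‖ ≤ 1 :=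
    fun x hx => le_trans (le_trans (le_max_left _ _) (hconorm x).le) hx
  have hco2 : ∀ x : K, ‖x‖ ≤ 1 → ‖(co x).2‖ ≤ 1 :=
    fun x hx => le_trans (le_trans (le_max_right _ _) (hconorm x).le) hx
  set toZp : ℚ_[p] → ℤ_[p] := fun q => if h : ‖q‖ ≤ 1 then ⟨q, h⟩ else 0 with htoZp
  have htoZp_coe : ∀ q : ℚ_[p], ‖q‖ ≤ 1 → ((toZp q : ℤ_[p]) : ℚ_[p]) = q := by
    intro q h
    rw [htoZp]
    exact congrArg Subtype.val (dif_pos h)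
  have htoZp_eq : ∀ (q : ℚ_[p]) (x : ℤ_[p]), (x : ℚ_[p]) = q → toZp q = x := by
    intro q x h
    have hq : ‖q‖ ≤ 1 := by rw [← h]; exact x.2
    apply Subtype.ext
    rw [htoZp_coe q hq, ← h]
  set φ : K → F := fun x =>
    of (PadicInt.toZMod (toZp (co x).1)) + of (PadicInt.toZMod (toZp (co x).2)) * θ with hφ
  -- congruence lemma
  have hcong : ∀ x y : K, ‖x‖ ≤ 1 → ‖y‖ ≤ 1 → (φ x = φ y ↔ ‖x - y‖ ≤ (p:ℝ)⁻¹) := by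
    intro x y hx hy
    have hsubco : x - y = algebraMap ℚ_[p] K ((co x).1 - (co y).1)
        + algebraMap ℚ_[p] K ((co x).2 - (co y).2) * sq := by
      rw [map_sub, map_sub]
      calc x - y = (algebraMap ℚ_[p] K (co x).1 + algebraMap ℚ_[p] K (co x).2 * sq)
            - (algebraMap ℚ_[p] K (co y).1 + algebraMap ℚ_[p] K (co y).2 * sq) := by
              rw [← hcospec, ← hcospec]
        _ = _ := by ring
    have hsubnorm : ‖x - y‖ = max ‖(co x).1 - (co y).1‖ ‖(co x).2 - (co y).2‖ := by
      rw [hsubco, aux14_coordnorm p hp hiso hna d hd hdns sq hsq]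
    have hXc : ((toZp (co x).1 - toZp (co y).1 : ℤ_[p]) : ℚ_[p]) = (co x).1 - (co y).1 := by
      push_cast
      rw [htoZp_coe _ (hco1 x hx), htoZp_coe _ (hco1 y hy)]
    have hYc : ((toZp (co x).2 - toZp (co y).2 : ℤ_[p]) : ℚ_[p]) = (co x).2 - (co y).2 := by
      push_cast
      rw [htoZp_coe _ (hco2 x hx), htoZp_coe _ (hco2 y hy)]
    constructor
    · intro h
      have h0 : of (PadicInt.toZMod (toZp (co x).1) - PadicInt.toZMod (toZp (co y).1))
          + of (PadicInt.toZMod (toZp (co x).2) - PadicInt.toZMod (toZp (co y).2)) * θ = 0 := by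
        rw [map_sub, map_sub]
        simp only [hφ] at h
        linear_combination h
      obtain ⟨h1, h2⟩ := hindep _ _ h0
      have h1' : PadicInt.toZMod (toZp (co x).1 - toZp (co y).1) = 0 := by
        rw [map_sub]; exact h1
      have h2' : PadicInt.toZMod (toZp (co x).2 - toZp (co y).2) = 0 := by
        rw [map_sub]; exact h2
      have hn1 := (aux14_mem_span_iff p _).mp h1'
      have hn2 := (aux14_mem_span_iff p _).mp h2'
      rw [← PadicInt.padic_norm_e_of_padicInt, hXc] at hn1
      rw [← PadicInt.padic_norm_e_of_padicInt, hYc] at hn2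
      rw [hsubnorm]
      exact max_le hn1 hn2
    · intro h
      rw [hsubnorm] at h
      have hn1 : ‖(toZp (co x).1 - toZp (co y).1 : ℤ_[p])‖ ≤ (p:ℝ)⁻¹ := by
        rw [← PadicInt.padic_norm_e_of_padicInt, hXc]
        exact le_trans (le_max_left _ _) h
      have hn2 : ‖(toZp (co x).2 - toZp (co y).2 : ℤ_[p])‖ ≤ (p:ℝ)⁻¹ := by
        rw [← PadicInt.padic_norm_e_of_padicInt, hYc]
        exact le_trans (le_max_right _ _) h
      have h1 := (aux14_mem_span_iff p _).mpr hn1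
      have h2 := (aux14_mem_span_iff p _).mpr hn2
      rw [map_sub] at h1 h2
      simp only [hφ]
      rw [sub_eq_zero.mp h1, sub_eq_zero.mp h2]
  -- multiplicativity
  have hmul : ∀ x y : K, ‖x‖ ≤ 1 → ‖y‖ ≤ 1 → φ (x * y) = φ x * φ y := by
    intro x y hx hy
    have hxy : x * y = algebraMap ℚ_[p] K ((co x).1 * (co y).1 + d * ((co x).2 * (co y).2))
        + algebraMap ℚ_[p] K ((co x).1 * (co y).2 + (co y).1 * (co x).2) * sq := by
      calc x * y = (algebraMap ℚ_[p] K (co x).1 + algebraMap ℚ_[p] K (co x).2 * sq)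
            * (algebraMap ℚ_[p] K (co y).1 + algebraMap ℚ_[p] K (co y).2 * sq) := by
              rw [← hcospec, ← hcospec]
        _ = _ := by
            simp only [map_add, map_mul]
            rw [← hsq]
            ring
    have hcoxy := aux14_coord_unique p hp hiso hna d hd hdns sq hsq
      (by rw [← hcospec, hxy] :
        algebraMap ℚ_[p] K (co (x*y)).1 + algebraMap ℚ_[p] K (co (x*y)).2 * sq
        = algebraMap ℚ_[p] K ((co x).1 * (co y).1 + d * ((co x).2 * (co y).2))
        + algebraMap ℚ_[p] K ((co x).1 * (co y).2 + (co y).1 * (co x).2) * sq)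
    have hu := hco1 x hx; have hv := hco2 x hx; have hs := hco1 y hy; have ht := hco2 y hy
    have hc1 : ((toZp (co x).1 * toZp (co y).1 + D * (toZp (co x).2 * toZp (co y).2) : ℤ_[p]) : ℚ_[p])
        = (co x).1 * (co y).1 + d * ((co x).2 * (co y).2) := by
      push_cast
      rw [htoZp_coe _ hu, htoZp_coe _ hs, htoZp_coe _ hv, htoZp_coe _ ht]
    have hc2 : ((toZp (co x).1 * toZp (co y).2 + toZp (co y).1 * toZp (co x).2 : ℤ_[p]) : ℚ_[p])
        = (co x).1 * (co y).2 + (co y).1 * (co x).2 := by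
      push_cast
      rw [htoZp_coe _ hu, htoZp_coe _ hs, htoZp_coe _ hv, htoZp_coe _ ht]
    have he1 : toZp (co (x * y)).1 = toZp (co x).1 * toZp (co y).1
        + D * (toZp (co x).2 * toZp (co y).2) := by
      rw [hcoxy.1]
      exact htoZp_eq _ _ hc1
    have he2 : toZp (co (x * y)).2 = toZp (co x).1 * toZp (co y).2
        + toZp (co y).1 * toZp (co x).2 := by
      rw [hcoxy.2]
      exact htoZp_eq _ _ hc2
    simp only [hφ, he1, he2, map_add, map_mul]
    rw [← hdb, ← hθ2]
    ring
  -- phi 1 = 1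
  have hone : φ 1 = 1 := by
    have hco1e := aux14_coord_unique p hp hiso hna d hd hdns sq hsq
      (by rw [← hcospec]; simp :
        algebraMap ℚ_[p] K (co 1).1 + algebraMap ℚ_[p] K (co 1).2 * sq
        = algebraMap ℚ_[p] K 1 + algebraMap ℚ_[p] K 0 * sq)
    have ht1 : toZp (1 : ℚ_[p]) = 1 := htoZp_eq _ _ (by push_cast; rfl)
    have ht0 : toZp (0 : ℚ_[p]) = 0 := htoZp_eq _ _ (by push_cast; rfl)
    simp only [hφ, hco1e.1, hco1e.2, ht1, ht0, map_one, map_zero]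
    ring
  -- powers
  have hpow : ∀ x : K, ‖x‖ ≤ 1 → ∀ n : ℕ, φ (x ^ n) = (φ x) ^ n := by
    intro x hx n
    induction n with
    | zero => simpa using hone
    | succ n ih =>
      rw [pow_succ, pow_succ, hmul (x ^ n) x (by
        rw [norm_pow]; exact pow_le_one₀ (norm_nonneg x) hx) hx, ih]
  -- characteristic p
  haveI hcharF : CharP F p := charP_of_injective_ringHom hofinj p
  have hpodd : p % 2 = 1 := Nat.odd_iff.mp (hprime.odd_of_ne_two (by omega))
  have hdb0 : db ≠ 0 := by
    intro h
    have := (aux14_mem_span_iff p D).mp h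
    have hDn : ‖D‖ = 1 := hd
    rw [hDn] at this
    have := lt_of_le_of_lt this (inv_lt_one_of_one_lt₀ hP)
    exact lt_irrefl _ this
  have heuler : db ^ (p / 2) = -1 := by
    have hne1 : db ^ (p / 2) ≠ 1 := by
      intro h
      obtain ⟨r, hr⟩ := (ZMod.euler_criterion p hdb0).mpr h
      exact hns r (by rw [pow_two, ← hr])
    have hsq1 : (db ^ (p / 2)) ^ 2 = 1 := by
      rw [← pow_mul]
      have : p / 2 * 2 = p - 1 := by omega
      rw [this]
      exact ZMod.pow_card_sub_one_eq_one hdb0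
    rcases sq_eq_one_iff.mp hsq1 with h | h
    · exact absurd h hne1
    · exact h
  have hθp : θ ^ p = -θ := by
    have hsplit : p = 2 * (p / 2) + 1 := by omega
    calc θ ^ p = θ ^ (2 * (p / 2)) * θ := by rw [← pow_succ, ← hsplit]
      _ = (θ ^ 2) ^ (p / 2) * θ := by rw [← pow_mul]
      _ = of (db ^ (p / 2)) * θ := by rw [hθ2, map_pow]
      _ = -θ := by rw [heuler, map_neg, map_one]; ring
  have hfrob : ∀ a b : ZMod p, (of a + of b * θ) ^ p = of a - of b * θ := by
    intro a b
    rw [add_pow_char, mul_pow, ← map_pow, ← map_pow, ZMod.pow_card, ZMod.pow_card, hθp]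
    ring
  -- norm-condition elements are (2(p+1))-th roots of unity
  have hU0pow : ∀ x : K, ‖x‖ ≤ 1 → (Nm x = 1 ∨ Nm x = -1) → (φ x) ^ (2 * (p + 1)) = 1 := by
    intro x hx hNx
    set a : ZMod p := PadicInt.toZMod (toZp (co x).1) with ha
    set b : ZMod p := PadicInt.toZMod (toZp (co x).2) with hb
    have hx1 : (φ x) ^ (p + 1) = of (a ^ 2 - db * b ^ 2) := by
      have hphix : φ x = of a + of b * θ := by simp only [hφ, ha, hb]
      rw [pow_succ, hphix, hfrob a b, map_sub, map_mul, map_pow, map_pow, ← hθ2]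
      ring
    have hNval : Nm x = (co x).1 ^ 2 - d * (co x).2 ^ 2 := by
      have := hNm (co x).1 (co x).2
      rw [← hcospec x] at this
      exact this
    have hcoe : ((toZp (co x).1 ^ 2 - D * toZp (co x).2 ^ 2 : ℤ_[p]) : ℚ_[p])
        = (co x).1 ^ 2 - d * (co x).2 ^ 2 := by
      push_cast
      rw [htoZp_coe _ (hco1 x hx), htoZp_coe _ (hco2 x hx)]
    have hres : of (a ^ 2 - db * b ^ 2) = 1 ∨ of (a ^ 2 - db * b ^ 2) = -1 := by
      have hmapped : a ^ 2 - db * b ^ 2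
          = PadicInt.toZMod (toZp (co x).1 ^ 2 - D * toZp (co x).2 ^ 2) := by
        rw [map_sub, map_mul, map_pow, map_pow, ha, hb, hdb]
      rcases hNx with h | h
      · left
        have hZ : (toZp (co x).1 ^ 2 - D * toZp (co x).2 ^ 2 : ℤ_[p]) = 1 := by
          apply Subtype.ext
          rw [hcoe, ← hNval, h]
          rfl
        rw [hmapped, hZ, map_one, map_one]
      · right
        have hZ : (toZp (co x).1 ^ 2 - D * toZp (co x).2 ^ 2 : ℤ_[p]) = -1 := by
          apply Subtype.ext
          rw [hcoe, ← hNval, h]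
          rfl
        rw [hmapped, hZ, map_neg, map_one, map_neg, map_one]
    have h2p : (φ x) ^ (2 * (p + 1)) = ((φ x) ^ (p + 1)) ^ 2 := by
      rw [← pow_mul, mul_comm (p+1) 2]
    rw [h2p, hx1]
    rcases hres with h | h <;> rw [h] <;> ring
  -- counting argument
  set g : ℕ → F := fun i => φ (lam ^ i) with hg
  have hlamipow : ∀ i : ℕ, ‖lam ^ i‖ ≤ 1 := by
    intro i
    rw [norm_pow, hlamn, one_pow]
  have hginj : Set.InjOn g (Finset.range l) := by
    intro i hi j hj hij
    simp only [Finset.coe_range, Set.mem_Iio] at hi hj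
    exact hdist i j hi hj ((hcong _ _ (hlamipow i) (hlamipow j)).mp hij)
  set T : Finset F := (Finset.range l).image g with hT
  have hTcard : T.card = l := by
    rw [hT, Finset.card_image_of_injOn hginj, Finset.card_range]
  have hTsub : T ⊆ (nthRoots l (1 : F)).toFinset := by
    intro t ht
    rw [hT, Finset.mem_image] at ht
    obtain ⟨i, hi, rfl⟩ := ht
    rw [Multiset.mem_toFinset, mem_nthRoots (by omega : 0 < l)]
    rw [hg]
    have := hU0pow (lam ^ i) (hlamipow i) (hNl i)
    rw [← hl2] at this
    exact this
  have hTeq : T = (nthRoots l (1 : F)).toFinset := by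
    apply Finset.eq_of_subset_of_card_le hTsub
    rw [hTcard]
    exact le_trans (Multiset.toFinset_card_le _) (card_nthRoots l 1)
  have hzroot : φ z ∈ T := by
    rw [hTeq, Multiset.mem_toFinset, mem_nthRoots (by omega : 0 < l)]
    have := hU0pow z hz1.le hzN
    rw [← hl2] at this
    exact this
  rw [hT, Finset.mem_image] at hzroot
  obtain ⟨i, hi, hgi⟩ := hzroot
  refine ⟨i, Finset.mem_range.mp hi, ?_⟩
  have := (hcong z (lam ^ i) hz1.le (hlamipow i)).mp ?_
  · exact this
  · rw [← hgi, hg]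

theorem aux14_NmLip (p : ℕ) [Fact p.Prime] (hp : 3 ≤ p) {K : Type} [NormedField K]
    [Algebra ℚ_[p] K]
    (hiso : ∀ x : ℚ_[p], ‖algebraMap ℚ_[p] K x‖ = ‖x‖)
    (hna : ∀ x y : K, ‖x + y‖ ≤ max ‖x‖ ‖y‖)
    (d : ℚ_[p]) (hd : ‖d‖ = 1) (hdns : ¬ ∃ y : ℚ_[p], y ^ 2 = d)
    (sq : K) (hsq : sq ^ 2 = algebraMap ℚ_[p] K d)
    (hspan : ∀ x : K, ∃ u v : ℚ_[p], x = algebraMap ℚ_[p] K u + algebraMap ℚ_[p] K v * sq)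
    (Nm : K → ℚ_[p])
    (hNm : ∀ u v : ℚ_[p],
      Nm (algebraMap ℚ_[p] K u + algebraMap ℚ_[p] K v * sq) = u ^ 2 - d * v ^ 2)
    (x y : K) (hx : ‖x‖ ≤ 1) (hy : ‖y‖ ≤ 1) :
    ‖Nm x - Nm y‖ ≤ ‖x - y‖ := by
  obtain ⟨u, v, hxc⟩ := hspan x
  obtain ⟨s, t, hyc⟩ := hspan y
  have hxn := aux14_coordnorm p hp hiso hna d hd hdns sq hsq u v
  rw [← hxc] at hxn
  have hyn := aux14_coordnorm p hp hiso hna d hd hdns sq hsq s t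
  rw [← hyc] at hyn
  have hu : ‖u‖ ≤ 1 := le_trans (le_trans (le_max_left _ _) hxn.symm.le) hx
  have hv : ‖v‖ ≤ 1 := le_trans (le_trans (le_max_right _ _) hxn.symm.le) hx
  have hs : ‖s‖ ≤ 1 := le_trans (le_trans (le_max_left _ _) hyn.symm.le) hy
  have ht : ‖t‖ ≤ 1 := le_trans (le_trans (le_max_right _ _) hyn.symm.le) hy
  have hsubc : x - y = algebraMap ℚ_[p] K (u - s) + algebraMap ℚ_[p] K (v - t) * sq := by
    rw [hxc, hyc, map_sub, map_sub]
    ring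
  have hsubn : ‖x - y‖ = max ‖u - s‖ ‖v - t‖ := by
    rw [hsubc, aux14_coordnorm p hp hiso hna d hd hdns sq hsq]
  have hus : ‖u - s‖ ≤ ‖x - y‖ := by rw [hsubn]; exact le_max_left _ _
  have hvt : ‖v - t‖ ≤ ‖x - y‖ := by rw [hsubn]; exact le_max_right _ _
  have hid : Nm x - Nm y = (u - s) * (u + s) - d * ((v - t) * (v + t)) := by
    rw [hxc, hyc, hNm, hNm]
    ring
  have hup : ‖u + s‖ ≤ 1 := le_trans (Padic.nonarchimedean u s) (max_le hu hs)
  have hvp : ‖v + t‖ ≤ 1 := le_trans (Padic.nonarchimedean v t) (max_le hv ht)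
  rw [hid, sub_eq_add_neg]
  refine le_trans (Padic.nonarchimedean _ _) (max_le ?_ ?_)
  · rw [norm_mul]
    calc ‖u - s‖ * ‖u + s‖ ≤ ‖u - s‖ * 1 := mul_le_mul_of_nonneg_left hup (norm_nonneg _)
      _ ≤ ‖x - y‖ := by rwa [mul_one]
  · rw [norm_neg, norm_mul, norm_mul, hd, one_mul]
    calc ‖v - t‖ * ‖v + t‖ ≤ ‖v - t‖ * 1 := mul_le_mul_of_nonneg_left hvp (norm_nonneg _)
      _ ≤ ‖x - y‖ := by rwa [mul_one]

theorem aux14_approx (p : ℕ) [Fact p.Prime] (hp : 3 ≤ p) {K : Type} [NormedField K]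
    [Algebra ℚ_[p] K]
    (hiso : ∀ x : ℚ_[p], ‖algebraMap ℚ_[p] K x‖ = ‖x‖)
    (hna : ∀ x y : K, ‖x + y‖ ≤ max ‖x‖ ‖y‖)
    (d : ℚ_[p]) (hd : ‖d‖ = 1) (hdns : ¬ ∃ y : ℚ_[p], y ^ 2 = d)
    (sq : K) (hsq : sq ^ 2 = algebraMap ℚ_[p] K d)
    (hspan : ∀ x : K, ∃ u v : ℚ_[p], x = algebraMap ℚ_[p] K u + algebraMap ℚ_[p] K v * sq)
    (Nm : K → ℚ_[p])
    (hNm : ∀ u v : ℚ_[p],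
      Nm (algebraMap ℚ_[p] K u + algebraMap ℚ_[p] K v * sq) = u ^ 2 - d * v ^ 2)
    (lam : K) (hlamn : ‖lam‖ = 1) (l k : ℕ) (hk1 : 1 ≤ k)
    (hNll : Nm (lam ^ l) = 1) (hkl : ‖lam ^ l - 1‖ = (p:ℝ) ^ (-(k:ℤ))) :
    ∀ j : ℕ, ∀ w : K, Nm w = 1 → ‖w - 1‖ ≤ (p:ℝ) ^ (-(k:ℤ)) →
      ∃ n : ℕ, ‖w - lam ^ (l * n)‖ ≤ (p:ℝ) ^ (-((k + j : ℕ) : ℤ)) := by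
  have hlam0 : lam ≠ 0 := by
    intro h
    rw [h, norm_zero] at hlamn
    norm_num at hlamn
  have hlamppow : ∀ n : ℕ, ‖lam ^ n‖ = 1 := fun n => by rw [norm_pow, hlamn, one_pow]
  have hμnorm : ∀ j : ℕ, ‖(lam ^ l) ^ (p ^ j) - 1‖ = (p:ℝ) ^ (-((k + j : ℕ) : ℤ)) := by
    intro j
    induction j with
    | zero => simpa using hkl
    | succ j ih =>
      have hsplit : (lam ^ l) ^ (p ^ (j+1)) = ((lam ^ l) ^ (p ^ j)) ^ p := by
        rw [pow_succ, pow_mul]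
      rw [hsplit]
      have := aux14_pow_p p hp hiso hna ((lam ^ l) ^ (p ^ j)) (k + j) (by omega) ih
      rw [this]
      congr 1
      push_cast
      ring
  have hμNm : ∀ j : ℕ, Nm ((lam ^ l) ^ (p ^ j)) = 1 := by
    intro j
    rw [aux14_Nm_pow p d sq hsq hspan Nm hNm, hNll, one_pow]
  intro j
  induction j with
  | zero =>
    intro w hNw hw
    exact ⟨0, by simpa using hw⟩
  | succ j ih =>
    intro w hNw hw
    obtain ⟨n, hn⟩ := ih w hNw hw
    have hpow0 : lam ^ (l * n) ≠ 0 := pow_ne_zero _ hlam0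
    set w' : K := w * (lam ^ (l * n))⁻¹ with hw'
    have hww : w' * lam ^ (l * n) = w := by
      rw [hw']
      field_simp
    have hNw' : Nm w' = 1 := by
      have hm := aux14_Nm_mul p d sq hsq hspan Nm hNm w' (lam ^ (l * n))
      rw [hww] at hm
      have hNln : Nm (lam ^ (l * n)) = 1 := by
        rw [pow_mul, aux14_Nm_pow p d sq hsq hspan Nm hNm, hNll, one_pow]
      rw [hNln, mul_one] at hm
      rw [← hm, hNw]
    have hw'norm : ‖w' - 1‖ ≤ (p:ℝ) ^ (-((k + j : ℕ) : ℤ)) := by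
      have : w' - 1 = (w - lam ^ (l * n)) * (lam ^ (l * n))⁻¹ := by
        rw [hw']
        field_simp
      rw [this, norm_mul, norm_inv, hlamppow, inv_one, mul_one]
      exact hn
    obtain ⟨c, hc⟩ := aux14_step p hp hiso hna d hd hdns sq hsq hspan Nm hNm
      w' ((lam ^ l) ^ (p ^ j)) (k + j) (by omega) hNw' (hμNm j) hw'norm (hμnorm j)
    refine ⟨n + p ^ j * c, ?_⟩
    have hid : w - lam ^ (l * (n + p ^ j * c))
        = (w' - ((lam ^ l) ^ (p ^ j)) ^ c) * lam ^ (l * n) := by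
      rw [sub_mul, hww]
      congr 1
      rw [← pow_mul, ← pow_mul, ← pow_add]
      congr 1
      ring
    rw [hid, norm_mul, hlamppow, mul_one]
    refine le_trans hc ?_
    apply le_of_eq
    congr 1
    push_cast
    ring

theorem stmt_14 (p : ℕ) [Fact p.Prime] (hp : 3 ≤ p)
    -- `K` is the unramified quadratic extension `ℚ_p(√d)` of `ℚ_p`
    (K : Type) [NormedField K] [Algebra ℚ_[p] K]
    (hiso : ∀ x : ℚ_[p], ‖algebraMap ℚ_[p] K x‖ = ‖x‖)
    (hna : ∀ x y : K, ‖x + y‖ ≤ max ‖x‖ ‖y‖)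
    (hval : ∀ x : K, x ≠ 0 → ∃ m : ℤ, ‖x‖ = (p : ℝ) ^ (-m))
    (d : ℚ_[p]) (hd : ‖d‖ = 1) (hdns : ¬ ∃ y : ℚ_[p], y ^ 2 = d)
    (sq : K) (hsq : sq ^ 2 = algebraMap ℚ_[p] K d)
    (hspan : ∀ x : K, ∃ u v : ℚ_[p], x = algebraMap ℚ_[p] K u + algebraMap ℚ_[p] K v * sq)
    -- `Nm` is the norm of `ℚ_p(√d)/ℚ_p`
    (Nm : K → ℚ_[p])
    (hNm : ∀ u v : ℚ_[p],
      Nm (algebraMap ℚ_[p] K u + algebraMap ℚ_[p] K v * sq) = u ^ 2 - d * v ^ 2)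
    -- `U0` is `U^0(√d) = {z ∈ ℤ_p[√d]^* : N(z) = ±1}`
    (U0 : Set K) (hU0 : U0 = {z : K | ‖z‖ = 1 ∧ (Nm z = 1 ∨ Nm z = -1)})
    -- `λ ∈ U^0(√d)` is not a root of unity
    (lam : K) (hlam : lam ∈ U0) (hru : ∀ n : ℕ, 0 < n → lam ^ n ≠ 1)
    -- `l` is the order of `λ` modulo `p`
    (l : ℕ) (hl0 : 0 < l) (hl : ‖lam ^ l - 1‖ ≤ (p : ℝ)⁻¹)
    (hlmin : ∀ m : ℕ, 0 < m → ‖lam ^ m - 1‖ ≤ (p : ℝ)⁻¹ → l ≤ m)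
    -- `k = ν_p(λ ^ l - 1)`
    (k : ℕ) (hk : ‖lam ^ l - 1‖ = (p : ℝ) ^ (-(k : ℤ))) :
    (closure {x : K | ∃ n : ℕ, x = lam ^ n} =
      ⋃ i ∈ Finset.range l, ({x : K | ‖x - lam ^ i‖ ≤ (p : ℝ) ^ (-(k : ℤ))} ∩ U0)) ∧
    (↑(Finset.range l) : Set ℕ).PairwiseDisjoint
      (fun i => {x : K | ‖x - lam ^ i‖ ≤ (p : ℝ) ^ (-(k : ℤ))} ∩ U0) ∧
    (l = 2 * (p + 1) → k = 1 → closure {x : K | ∃ n : ℕ, x = lam ^ n} = U0) := by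
  have hP : (1:ℝ) < p := by exact_mod_cast lt_of_lt_of_le (by norm_num) hp
  have hP0 : (0:ℝ) < p := lt_trans one_pos hP
  have hinvlt : (p:ℝ)⁻¹ < 1 := inv_lt_one_of_one_lt₀ hP
  rw [hU0] at hlam
  obtain ⟨hlamn, hNmlam⟩ := hlam
  have hlam0 : lam ≠ 0 := by
    intro h
    rw [h, norm_zero] at hlamn
    norm_num at hlamn
  have hlampow : ∀ n : ℕ, ‖lam ^ n‖ = 1 := fun n => by rw [norm_pow, hlamn, one_pow]
  have hNl : ∀ i : ℕ, Nm (lam ^ i) = 1 ∨ Nm (lam ^ i) = -1 := by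
    intro i
    rw [aux14_Nm_pow p d sq hsq hspan Nm hNm]
    rcases hNmlam with h | h
    · left; rw [h, one_pow]
    · rcases Nat.even_or_odd i with he | ho
      · left; rw [h, he.neg_one_pow]
      · right; rw [h, ho.neg_one_pow]
  have hkle : (p:ℝ) ^ (-(k:ℤ)) ≤ (p:ℝ)⁻¹ := by rw [← hk]; exact hl
  have hk1 : 1 ≤ k := by
    by_contra h
    push_neg at h
    have h0 : k = 0 := by omega
    subst h0
    norm_num at hkle
    linarith
  have hrk_pos : (0:ℝ) < (p:ℝ) ^ (-(k:ℤ)) := by positivity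
  have hrk_lt1 : (p:ℝ) ^ (-(k:ℤ)) < 1 := lt_of_le_of_lt hkle hinvlt
  have hgeom : ∀ q : ℕ, ‖lam ^ (l * q) - 1‖ ≤ (p:ℝ) ^ (-(k:ℤ)) := by
    intro q
    have hq : lam ^ (l * q) - 1 = (∑ i ∈ Finset.range q, (lam ^ l) ^ i) * (lam ^ l - 1) := by
      rw [geom_sum_mul, pow_mul]
    rw [hq, norm_mul, hk]
    have hsum : ‖∑ i ∈ Finset.range q, (lam ^ l) ^ i‖ ≤ 1 := by
      refine aux14_sum_le hna _ _ 1 zero_le_one ?_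
      intro i _
      rw [← pow_mul]
      exact (hlampow (l * i)).le
    calc ‖∑ i ∈ Finset.range q, (lam ^ l) ^ i‖ * (p:ℝ) ^ (-(k:ℤ))
        ≤ 1 * (p:ℝ) ^ (-(k:ℤ)) := mul_le_mul_of_nonneg_right hsum hrk_pos.le
      _ = (p:ℝ) ^ (-(k:ℤ)) := one_mul _
  have hmemU0 : ∀ n : ℕ, lam ^ n ∈ U0 := by
    intro n
    rw [hU0]
    exact ⟨hlampow n, hNl n⟩
  have hkey : ∀ i j : ℕ, i < j → j < l → ¬ (‖lam ^ j - lam ^ i‖ ≤ (p:ℝ)⁻¹) := by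
    intro i j hij hjl h
    have hfac : lam ^ j - lam ^ i = (lam ^ (j - i) - 1) * lam ^ i := by
      rw [sub_mul, ← pow_add, one_mul]
      congr 2
      omega
    rw [hfac, norm_mul, hlampow, mul_one] at h
    have := hlmin (j - i) (by omega) h
    omega
  have hdist : ∀ i j : ℕ, i < l → j < l → ‖lam ^ i - lam ^ j‖ ≤ (p:ℝ)⁻¹ → i = j := by
    intro i j hi hj h
    rcases lt_trichotomy i j with hlt | he | hgt
    · exact absurd (by rwa [norm_sub_rev] at h) (hkey i j hlt hj)
    · exact he
    · exact absurd h (hkey j i hgt hi)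
  have hpart2 : (↑(Finset.range l) : Set ℕ).PairwiseDisjoint
      (fun i => {x : K | ‖x - lam ^ i‖ ≤ (p : ℝ) ^ (-(k : ℤ))} ∩ U0) := by
    intro i hi j hj hij
    simp only [Finset.coe_range, Set.mem_Iio] at hi hj
    refine Set.disjoint_left.mpr ?_
    intro z hz1 hz2
    apply hij
    apply hdist i j hi hj
    have h1 : ‖lam ^ i - lam ^ j‖ ≤ max ‖lam ^ i - z‖ ‖z - lam ^ j‖ := by
      have := hna (lam ^ i - z) (z - lam ^ j)
      simpa using this
    refine le_trans h1 (le_trans (max_le ?_ ?_) hkle)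
    · rw [norm_sub_rev]
      exact hz1.1
    · exact hz2.1
  have hsub1 : {x : K | ∃ n : ℕ, x = lam ^ n} ⊆
      ⋃ i ∈ Finset.range l, ({x : K | ‖x - lam ^ i‖ ≤ (p : ℝ) ^ (-(k : ℤ))} ∩ U0) := by
    rintro x ⟨n, rfl⟩
    have hi : n % l ∈ Finset.range l := Finset.mem_range.mpr (Nat.mod_lt _ hl0)
    rw [Set.mem_iUnion₂]
    refine ⟨n % l, hi, ?_, hmemU0 n⟩
    show ‖lam ^ n - lam ^ (n % l)‖ ≤ _
    have hfac : lam ^ n - lam ^ (n % l) = (lam ^ (l * (n / l)) - 1) * lam ^ (n % l) := by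
      have hn' : lam ^ n = lam ^ (l * (n / l) + n % l) :=
        congrArg (fun m => lam ^ m) (Nat.div_add_mod n l).symm
      rw [sub_mul, ← pow_add, one_mul, ← hn']
    rw [hfac, norm_mul, hlampow, mul_one]
    exact hgeom (n / l)
  have hclosed : IsClosed (⋃ i ∈ Finset.range l,
      ({x : K | ‖x - lam ^ i‖ ≤ (p : ℝ) ^ (-(k : ℤ))} ∩ U0)) := by
    refine Set.Finite.isClosed_biUnion (Finset.range l).finite_toSet ?_
    intro i _
    apply isClosed_of_closure_subset
    intro x hx
    rw [Metric.mem_closure_iff] at hx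
    have hball : ‖x - lam ^ i‖ ≤ (p:ℝ) ^ (-(k:ℤ)) := by
      refine le_of_forall_pos_le_add ?_
      intro ε hε
      obtain ⟨y, hy, hxy⟩ := hx ε hε
      rw [dist_eq_norm] at hxy
      have h1 : ‖x - lam ^ i‖ ≤ ‖x - y‖ + ‖y - lam ^ i‖ := by
        have h2 : x - lam ^ i = (x - y) + (y - lam ^ i) := by ring
        rw [h2]
        exact norm_add_le _ _
      have h3 : ‖y - lam ^ i‖ ≤ (p:ℝ) ^ (-(k:ℤ)) := hy.1
      linarith
    have hlt : ‖x - lam ^ i‖ < ‖lam ^ i‖ := by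
      rw [hlampow]
      exact lt_of_le_of_lt hball hrk_lt1
    have hxnorm : ‖x‖ = 1 := by
      have hdom := aux14_dom hna (lam ^ i) (x - lam ^ i) hlt
      have hxe : lam ^ i + (x - lam ^ i) = x := by ring
      rw [hxe, hlampow] at hdom
      exact hdom
    have hNx : Nm x = 1 ∨ Nm x = -1 := by
      by_contra hcon
      push_neg at hcon
      have hδ0 : 0 < min ‖Nm x - 1‖ ‖Nm x + 1‖ := by
        apply lt_min
        · rw [norm_pos_iff]
          exact sub_ne_zero.mpr hcon.1
        · rw [norm_pos_iff]
          intro h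
          exact hcon.2 (by linear_combination h)
      obtain ⟨y, hy, hxy⟩ := hx _ hδ0
      rw [dist_eq_norm] at hxy
      have hyU := hy.2
      rw [hU0] at hyU
      have hylip := aux14_NmLip p hp hiso hna d hd hdns sq hsq hspan Nm hNm x y
        hxnorm.le hyU.1.le
      rcases hyU.2 with h | h
      · have h1 : ‖Nm x - 1‖ < min ‖Nm x - 1‖ ‖Nm x + 1‖ := by
          calc ‖Nm x - 1‖ = ‖Nm x - Nm y‖ := by rw [h]
            _ ≤ ‖x - y‖ := hylip
            _ < _ := hxy
        have := min_le_left ‖Nm x - 1‖ ‖Nm x + 1‖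
        linarith
      · have h1 : ‖Nm x + 1‖ < min ‖Nm x - 1‖ ‖Nm x + 1‖ := by
          calc ‖Nm x + 1‖ = ‖Nm x - Nm y‖ := by rw [h, sub_neg_eq_add]
            _ ≤ ‖x - y‖ := hylip
            _ < _ := hxy
        have := min_le_right ‖Nm x - 1‖ ‖Nm x + 1‖
        linarith
    exact ⟨hball, by rw [hU0]; exact ⟨hxnorm, hNx⟩⟩
  have hNll : Nm (lam ^ l) = 1 :=
    aux14_nm_pm1 p hp hiso hna d hd hdns sq hsq hspan Nm hNm (lam ^ l) (hNl l) hl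
  have hsub2 : (⋃ i ∈ Finset.range l,
      ({x : K | ‖x - lam ^ i‖ ≤ (p : ℝ) ^ (-(k : ℤ))} ∩ U0)) ⊆
      closure {x : K | ∃ n : ℕ, x = lam ^ n} := by
    intro x hx
    rw [Set.mem_iUnion₂] at hx
    obtain ⟨i, hi, hball, hxU⟩ := hx
    rw [hU0] at hxU
    have hpow0 : lam ^ i ≠ 0 := pow_ne_zero _ hlam0
    set w : K := x * (lam ^ i)⁻¹ with hw
    have hww : w * lam ^ i = x := by
      rw [hw]
      field_simp
    have hwnorm : ‖w - 1‖ ≤ (p:ℝ) ^ (-(k:ℤ)) := by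
      have hwid : w - 1 = (x - lam ^ i) * (lam ^ i)⁻¹ := by
        rw [hw]
        field_simp
      rw [hwid, norm_mul, norm_inv, hlampow, inv_one, mul_one]
      exact hball
    have hNw : Nm w = 1 := by
      apply aux14_nm_pm1 p hp hiso hna d hd hdns sq hsq hspan Nm hNm w ?_
        (le_trans hwnorm hkle)
      have hm := aux14_Nm_mul p d sq hsq hspan Nm hNm w (lam ^ i)
      rw [hww] at hm
      rcases hNl i with h1 | h1 <;> rcases hxU.2 with h2 | h2 <;> rw [h1, h2] at hm
      · exact Or.inl (by linear_combination -hm)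
      · exact Or.inr (by linear_combination -hm)
      · exact Or.inr (by linear_combination hm)
      · exact Or.inl (by linear_combination hm)
    rw [Metric.mem_closure_iff]
    intro ε hε
    obtain ⟨j, hj⟩ := exists_pow_lt_of_lt_one hε hinvlt
    obtain ⟨n, hn⟩ := aux14_approx p hp hiso hna d hd hdns sq hsq hspan Nm hNm lam hlamn
      l k hk1 hNll hk j w hNw hwnorm
    refine ⟨lam ^ (l * n + i), ⟨l * n + i, rfl⟩, ?_⟩
    rw [dist_eq_norm]
    have hidd : x - lam ^ (l * n + i) = (w - lam ^ (l * n)) * lam ^ i := by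
      rw [sub_mul, hww, ← pow_add]
    rw [hidd, norm_mul, hlampow, mul_one]
    have hconv : ((p:ℝ)⁻¹) ^ j = (p:ℝ) ^ (-(j:ℤ)) := by
      rw [inv_pow, ← zpow_natCast, ← zpow_neg]
    refine lt_of_le_of_lt (le_trans hn ?_) (by rw [hconv] at hj; exact hj)
    rw [← hconv]
    rw [hconv]
    apply zpow_le_zpow_right₀ hP.le
    push_cast
    omega
  have hpart1 : closure {x : K | ∃ n : ℕ, x = lam ^ n} =
      ⋃ i ∈ Finset.range l, ({x : K | ‖x - lam ^ i‖ ≤ (p : ℝ) ^ (-(k : ℤ))} ∩ U0) :=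
    Set.Subset.antisymm (closure_minimal hsub1 hclosed) hsub2
  refine ⟨hpart1, hpart2, ?_⟩
  intro hl2 hk1e
  rw [hpart1]
  apply Set.Subset.antisymm
  · intro x hx
    rw [Set.mem_iUnion₂] at hx
    obtain ⟨i, _, _, hxU⟩ := hx
    exact hxU
  · intro z hz
    have hz' := hz
    rw [hU0] at hz'
    obtain ⟨i, hil, hzi⟩ := aux14_part3 p hp hiso hna d hd hdns sq hsq hspan Nm hNm lam
      hlamn hNl l hl2 hdist z hz'.1 hz'.2
    rw [Set.mem_iUnion₂]
    refine ⟨i, Finset.mem_range.mpr hil, ?_, hz⟩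
    show ‖z - lam ^ i‖ ≤ (p:ℝ) ^ (-(k:ℤ))
    rw [hk1e]
    rw [show (-((1:ℕ):ℤ)) = (-1 : ℤ) by norm_num, zpow_neg_one]
    exact hzi
end

section
/- Let p ≥ 3 be a prime that is not a Wall–Sun–Sun prime, and suppose the rank of appearance of p in the Fibonacci sequence satisfies α_F(p) = p + 1. Then the Kepler set of the Fibonacci sequence is the whole p-adic field: K((F_n)) = ℚ_p. -/
open Nat in
lemma docagne (d m : ℕ) :
    (fib (m + d) : ℤ) * fib (m + 1) - (fib (m + d + 1) : ℤ) * fib m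
      = (-1) ^ m * fib d := by
  induction m with
  | zero => simp
  | succ n ih =>
    have e1 : n + 1 + d = n + d + 1 := by omega
    rw [e1, show n + d + 1 + 1 = (n+d) + 2 from rfl, show n + 1 + 1 = n + 2 from rfl,
      Nat.fib_add_two, Nat.fib_add_two]
    push_cast
    ring_nf
    ring_nf at ih
    linarith [ih]

open Nat in
lemma fib_mul_add_one (m n : ℕ) : ∃ t : ℤ,
    (fib (m * n + 1) : ℤ) = (fib (m+1) : ℤ) ^ n + (fib m : ℤ)^2 * t := by
  induction n with
  | zero => exact ⟨0, by simp⟩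
  | succ n ih =>
    obtain ⟨t, ht⟩ := ih
    obtain ⟨w, hw⟩ : (fib m : ℤ) ∣ (fib (m * n) : ℤ) := by
      exact_mod_cast Int.natCast_dvd_natCast.2 (Nat.fib_dvd m (m*n) ⟨n, rfl⟩)
    have key : fib (m * (n+1) + 1) = fib (m*n) * fib m + fib (m*n+1) * fib (m+1) := by
      have := Nat.fib_add (m*n) m
      rw [show m * (n+1) + 1 = m * n + m + 1 by ring] at *
      omega
    refine ⟨w + t * fib (m+1), ?_⟩
    have : (fib (m * (n+1) + 1) : ℤ) = (fib (m*n) : ℤ) * fib m + (fib (m*n+1) : ℤ) * fib (m+1) := by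
      exact_mod_cast congrArg (Nat.cast : ℕ → ℤ) key
    rw [this, hw, ht]
    ring

open Nat in
lemma fib_mul (m : ℕ) (hm : 1 ≤ m) (k : ℕ) : ∃ s : ℤ,
    (fib (m * (k + 2)) : ℤ) = (k + 2 : ℤ) * fib m * (fib (m+1) : ℤ) ^ (k+1)
      - ((k+2).choose 2 : ℤ) * (fib m : ℤ)^2 * (fib (m+1) : ℤ) ^ k
      + (fib m : ℤ)^3 * s := by
  -- preliminary: fib (m-1) as integer is fib (m+1) - fib m
  obtain ⟨m', rfl⟩ : ∃ m', m = m' + 1 := ⟨m - 1, by omega⟩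
  have hfm : (fib m' : ℤ) = (fib (m' + 2) : ℤ) - fib (m' + 1) := by
    rw [Nat.fib_add_two]; push_cast; ring
  induction k with
  | zero =>
    -- fib (2m) = fib m * (fib (m+1) + fib (m-1)) ; use fib_add m' m
    have key : fib (m' + 1 + (m' + 1)) = fib m' * fib (m'+1) + fib (m'+1) * fib (m'+2) := by
      have := Nat.fib_add m' (m' + 1)
      rw [show m' + (m'+1) + 1 = m' + 1 + (m'+1) by ring] at this
      rw [this]
    refine ⟨0, ?_⟩
    rw [show (m'+1) * (0 + 2) = m' + 1 + (m' + 1) by ring, key]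
    push_cast [hfm]
    simp only [show m' + 1 + 1 = m' + 2 from rfl]
    simp [Nat.choose]
    try ring
  | succ k ih =>
    obtain ⟨s, hs⟩ := ih
    obtain ⟨t, ht⟩ := fib_mul_add_one (m' + 1) (k + 2)
    have key : fib ((m'+1) * (k + 3)) = fib m' * fib ((m'+1)*(k+2)) + fib (m'+1) * fib ((m'+1)*(k+2) + 1) := by
      have := Nat.fib_add m' ((m'+1)*(k+2))
      rw [show m' + (m'+1)*(k+2) + 1 = (m'+1) * (k+3) by ring] at this
      rw [this]
    have hch : ((k+3).choose 2 : ℤ) = ((k+2).choose 2 : ℤ) + (k + 2 : ℤ) := by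
      rw [show k + 3 = (k+2) + 1 from rfl]
      rw [Nat.choose_succ_succ (k+2) 1]
      push_cast [Nat.choose_one_right]
      ring
    refine ⟨((k+2).choose 2 : ℤ) * (fib (m'+2) : ℤ)^k + s * fib (m'+2) - s * fib (m'+1) + t, ?_⟩
    have keyZ : (fib ((m'+1) * (k + 3)) : ℤ)
        = ((fib (m'+2) : ℤ) - fib (m'+1)) * fib ((m'+1)*(k+2)) + (fib (m'+1) : ℤ) * fib ((m'+1)*(k+2) + 1) := by
      rw [← hfm]; exact_mod_cast congrArg (Nat.cast : ℕ → ℤ) key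
    rw [keyZ, hs, ht, hch]
    push_cast
    ring


open Nat in
lemma not_dvd_fib_succ {p m : ℕ} (hp : p.Prime) (h : p ∣ fib m) : ¬ p ∣ fib (m + 1) := by
  intro h'
  have : p ∣ Nat.gcd (fib m) (fib (m+1)) := Nat.dvd_gcd h h'
  rw [fib_coprime_fib_succ m] at this
  exact hp.ne_one (Nat.dvd_one.mp this)

open Nat in
lemma step_p (p m e : ℕ) (hp : p.Prime) (hodd : 3 ≤ p) (hm : 1 ≤ m) (he : 1 ≤ e)
    (h1 : p ^ e ∣ fib m) (h2 : ¬ p ^ (e+1) ∣ fib m) :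
    p ^ (e+1) ∣ fib (m * p) ∧ ¬ p ^ (e+2) ∣ fib (m * p) := by
  obtain ⟨k, hk⟩ : ∃ k, p = k + 2 := ⟨p - 2, by omega⟩
  obtain ⟨e', rfl⟩ : ∃ e', e = e' + 1 := ⟨e - 1, by omega⟩
  obtain ⟨s, hs⟩ := fib_mul m hm k
  set F : ℤ := (fib m : ℤ) with hF
  set A : ℤ := (fib (m+1) : ℤ) with hA
  have hprime : Prime (p : ℤ) := Nat.prime_iff_prime_int.mp hp
  have hFe : (p:ℤ)^(e'+1) ∣ F := by rw [hF]; exact_mod_cast h1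
  obtain ⟨c, hc⟩ := hFe
  have hpc : ¬ (p:ℤ) ∣ c := by
    intro ⟨d, hd⟩
    apply h2
    have : (p:ℤ)^(e'+1+1) ∣ F := ⟨d, by rw [hc, hd]; ring⟩
    rw [hF] at this; exact_mod_cast this
  have hpA : ¬ (p:ℤ) ∣ A := by
    intro h
    rw [hA] at h
    have hA' : p ∣ fib (m+1) := by exact_mod_cast h
    exact not_dvd_fib_succ hp (dvd_trans (dvd_pow_self p (by omega)) h1) hA'
  obtain ⟨C', hC'⟩ : (p:ℤ) ∣ (p.choose 2 : ℤ) := by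
    exact_mod_cast Int.natCast_dvd_natCast.2 (hp.dvd_choose_self (by norm_num) (by omega))
  have hkp : ((k : ℤ) + 2) = (p : ℤ) := by exact_mod_cast congrArg (Nat.cast : ℕ → ℤ) hk.symm
  rw [← hk] at hs
  have key : (fib (m * p) : ℤ)
      = (p:ℤ)^(e'+2) * (c * A^(k+1) + p * (- C' * (p:ℤ)^e' * c^2 * A^k + (p:ℤ)^(2*e') * c^3 * s)) := by
    rw [hs, hc, hC', ← hkp]
    ring
  have hnd : ¬ (p:ℤ) ∣ (c * A^(k+1) + p * (- C' * (p:ℤ)^e' * c^2 * A^k + (p:ℤ)^(2*e') * c^3 * s)) := by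
    intro hd
    have : (p:ℤ) ∣ c * A^(k+1) := (dvd_add_right (Dvd.intro _ rfl)).mp (by rwa [add_comm] at hd)
    rcases hprime.dvd_mul.mp this with h | h
    · exact hpc h
    · exact hpA (hprime.dvd_of_dvd_pow h)
  constructor
  · have : ((p:ℤ)^(e'+2)) ∣ (fib (m*p) : ℤ) := ⟨_, key⟩
    exact_mod_cast this
  · intro hcon
    have hcon' : (p:ℤ)^(e'+2) * (p:ℤ) ∣ (fib (m*p) : ℤ) := by
      rw [← pow_succ]
      exact_mod_cast Int.natCast_dvd_natCast.2 hcon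
    rw [key] at hcon'
    exact hnd ((mul_dvd_mul_iff_left (pow_ne_zero (e'+2) hprime.ne_zero)).mp hcon')

open Nat in
lemma step_coprime (p m e n : ℕ) (hp : p.Prime) (hm : 1 ≤ m) (he : 1 ≤ e) (hn : 1 ≤ n)
    (hpn : ¬ p ∣ n) (h1 : p ^ e ∣ fib m) (h2 : ¬ p ^ (e+1) ∣ fib m) :
    p ^ e ∣ fib (m * n) ∧ ¬ p ^ (e+1) ∣ fib (m * n) := by
  rcases Nat.lt_or_ge n 2 with h | h
  · have : n = 1 := by omega
    subst this
    simpa using ⟨h1, h2⟩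
  obtain ⟨k, hk⟩ : ∃ k, n = k + 2 := ⟨n - 2, by omega⟩
  obtain ⟨e', rfl⟩ : ∃ e', e = e' + 1 := ⟨e - 1, by omega⟩
  obtain ⟨s, hs⟩ := fib_mul m hm k
  set F : ℤ := (fib m : ℤ) with hF
  set A : ℤ := (fib (m+1) : ℤ) with hA
  have hprime : Prime (p : ℤ) := Nat.prime_iff_prime_int.mp hp
  have hFe : (p:ℤ)^(e'+1) ∣ F := by rw [hF]; exact_mod_cast h1
  obtain ⟨c, hc⟩ := hFe
  have hpc : ¬ (p:ℤ) ∣ c := by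
    intro ⟨d, hd⟩
    apply h2
    have : (p:ℤ)^(e'+1+1) ∣ F := ⟨d, by rw [hc, hd]; ring⟩
    rw [hF] at this; exact_mod_cast this
  have hpA : ¬ (p:ℤ) ∣ A := by
    intro h
    rw [hA] at h
    have hA' : p ∣ fib (m+1) := by exact_mod_cast h
    exact not_dvd_fib_succ hp (dvd_trans (dvd_pow_self p (by omega)) h1) hA'
  have hpn' : ¬ (p:ℤ) ∣ (n:ℤ) := by exact_mod_cast hpn
  have hkn : ((k : ℤ) + 2) = (n : ℤ) := by exact_mod_cast congrArg (Nat.cast : ℕ → ℤ) hk.symm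
  rw [← hk] at hs
  have key : (fib (m * n) : ℤ)
      = (p:ℤ)^(e'+1) * ((n:ℤ) * c * A^(k+1)
          + p * (- (n.choose 2 : ℤ) * (p:ℤ)^e' * c^2 * A^k + (p:ℤ)^(2*e'+1) * c^3 * s)) := by
    rw [hs, hc, hkn]
    ring
  have hnd : ¬ (p:ℤ) ∣ ((n:ℤ) * c * A^(k+1)
      + p * (- (n.choose 2 : ℤ) * (p:ℤ)^e' * c^2 * A^k + (p:ℤ)^(2*e'+1) * c^3 * s)) := by
    intro hd
    have : (p:ℤ) ∣ (n:ℤ) * c * A^(k+1) := (dvd_add_right (Dvd.intro _ rfl)).mp (by rwa [add_comm] at hd)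
    rcases hprime.dvd_mul.mp this with h | h
    · rcases hprime.dvd_mul.mp h with h' | h'
      · exact hpn' h'
      · exact hpc h'
    · exact hpA (hprime.dvd_of_dvd_pow h)
  constructor
  · have : ((p:ℤ)^(e'+1)) ∣ (fib (m*n) : ℤ) := ⟨_, key⟩
    exact_mod_cast this
  · intro hcon
    have hcon' : (p:ℤ)^(e'+1) * (p:ℤ) ∣ (fib (m*n) : ℤ) := by
      rw [← pow_succ]
      exact_mod_cast Int.natCast_dvd_natCast.2 hcon
    rw [key] at hcon'
    exact hnd ((mul_dvd_mul_iff_left (pow_ne_zero (e'+1) hprime.ne_zero)).mp hcon')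

open Nat in
lemma exact_fib (p α : ℕ) (hp : p.Prime) (hodd : 3 ≤ p) (hα0 : 0 < α)
    (hαdvd : p ∣ fib α) (hWSS : ¬ p^2 ∣ fib α) :
    ∀ j, p ^ (j+1) ∣ fib (α * p^j) ∧ ¬ p ^ (j+2) ∣ fib (α * p^j) := by
  intro j
  induction j with
  | zero => simpa using ⟨hαdvd, hWSS⟩
  | succ j ih =>
    have h := step_p p (α * p^j) (j+1) hp hodd
      (by have h0 := hp.pos; exact Nat.succ_le_of_lt (by positivity)) (by omega) ih.1 ih.2
    rw [show α * p^j * p = α * p^(j+1) by ring] at h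
    exact h

open Nat in
lemma rank_fib (p α : ℕ) (hp : p.Prime) (hodd : 3 ≤ p) (hα0 : 0 < α)
    (hαdvd : p ∣ fib α) (hαmin : ∀ m : ℕ, 0 < m → p ∣ fib m → α ≤ m)
    (hWSS : ¬ p^2 ∣ fib α) (k : ℕ) (n : ℕ) (hn : 0 < n) :
    p ^ (k+1) ∣ fib n ↔ α * p ^ k ∣ n := by
  constructor
  · intro h
    have hpn : p ∣ fib n := dvd_trans (dvd_pow_self p (Nat.succ_ne_zero k)) h
    have hαn : α ∣ n := by
      have h1 : p ∣ Nat.gcd (fib α) (fib n) := Nat.dvd_gcd hαdvd hpn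
      rw [← Nat.fib_gcd] at h1
      have h2 : α ≤ Nat.gcd α n := hαmin _ (Nat.gcd_pos_of_pos_left n hα0) h1
      have h3 : Nat.gcd α n ∣ α := Nat.gcd_dvd_left α n
      have h4 : Nat.gcd α n = α := le_antisymm (Nat.le_of_dvd hα0 h3) h2
      rw [← h4]; exact Nat.gcd_dvd_right α n
    obtain ⟨m, rfl⟩ := hαn
    have hm : 0 < m := by
      rcases Nat.eq_zero_or_pos m with h0 | h0
      · subst h0; simp at hn
      · exact h0
    set j := m.factorization p with hj
    set r := m / p ^ j with hr
    have hmr : p ^ j * r = m := Nat.ordProj_mul_ordCompl_eq_self m p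
    have hpr : ¬ p ∣ r := Nat.not_dvd_ordCompl hp hm.ne'
    have hr0 : 0 < r := by
      rcases Nat.eq_zero_or_pos r with h0 | h0
      · rw [h0, mul_zero] at hmr; omega
      · exact h0
    have hstep := step_coprime p (α * p^j) (j+1) r hp (by have h0 := hp.pos; exact Nat.succ_le_of_lt (by positivity)) (by omega)
      hr0 hpr (exact_fib p α hp hodd hα0 hαdvd hWSS j).1 (exact_fib p α hp hodd hα0 hαdvd hWSS j).2
    rw [show α * p^j * r = α * m by rw [mul_assoc, hmr]] at hstep
    have hkj : k ≤ j := by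
      by_contra hc
      exact hstep.2 (dvd_trans (pow_dvd_pow p (by omega)) h)
    exact mul_dvd_mul_left α (dvd_trans (pow_dvd_pow p hkj) ⟨r, hmr.symm⟩)
  · intro h
    exact dvd_trans (exact_fib p α hp hodd hα0 hαdvd hWSS k).1 (Nat.fib_dvd _ _ h)

open Nat Finset

lemma fib_pair_surj (p α : ℕ) (hp : p.Prime) (hodd : 3 ≤ p) (hα0 : 0 < α)
    (hαdvd : p ∣ fib α) (hαmin : ∀ m : ℕ, 0 < m → p ∣ fib m → α ≤ m)
    (hWSS : ¬ p^2 ∣ fib α) (hα : α = p + 1) (k : ℕ)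
    (a b : ZMod (p^(k+1))) (hab : IsUnit a ∨ IsUnit b) :
    ∃ (n : ℕ) (lam : ZMod (p^(k+1))), IsUnit lam ∧
      (fib n : ZMod (p^(k+1))) = lam * a ∧ (fib (n+1) : ZMod (p^(k+1))) = lam * b := by
  classical
  revert hab
  revert a b
  have hp2 : 2 ≤ p := hp.two_le
  have hppos : 0 < p := hp.pos
  haveI hN : NeZero (p^(k+1)) := ⟨pow_ne_zero _ hppos.ne'⟩
  haveI hB : NeZero (α * p^k) := ⟨by positivity⟩
  set N := p^(k+1) with hNdef
  set β := α * p^k with hBdef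
  intro a b hab
  -- units from non-divisibility
  have hu : ∀ n : ℕ, ¬ p ∣ n → IsUnit ((n : ZMod N)) := by
    intro n h
    exact (ZMod.isUnit_iff_coprime _ _).mpr
      (Nat.Coprime.pow_right _ (((hp.coprime_iff_not_dvd).mpr h).symm))
  have hunim : ∀ n : ℕ, IsUnit ((fib n : ZMod N)) ∨ IsUnit ((fib (n+1) : ZMod N)) := by
    intro n
    by_cases hd : p ∣ fib n
    · exact Or.inr (hu (fib (n+1)) (not_dvd_fib_succ hp hd))
    · exact Or.inl (hu (fib n) hd)
  -- the orbit map
  set f : ZMod β × (ZMod N)ˣ → ZMod N × ZMod N :=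
    fun x => (↑x.2 * (fib x.1.val : ZMod N), ↑x.2 * (fib (x.1.val + 1) : ZMod N)) with hf
  -- cross-ratio vanishing
  have hcross : ∀ (u v : ℕ), u ≤ v → ∀ (lam mu : (ZMod N)ˣ),
      (↑lam * (fib u : ZMod N) = ↑mu * (fib v : ZMod N)) →
      (↑lam * (fib (u+1) : ZMod N) = ↑mu * (fib (v+1) : ZMod N)) →
      (N : ℕ) ∣ fib (v - u) := by
    intro u v huv lam mu h1 h2
    set d := v - u with hd
    have hv : u + d = v := by omega
    have hZ0 := docagne d u
    rw [hv] at hZ0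
    have hZ := congrArg (fun z : ℤ => (z : ZMod N)) hZ0
    push_cast at hZ
    have h0 : (↑mu : ZMod N) * ((-1)^u * (fib d : ZMod N)) = 0 := by
      rw [← hZ]
      linear_combination (fib u : ZMod N) * h2 - (fib (u+1) : ZMod N) * h1
    rw [Units.mul_right_eq_zero] at h0
    have hneg : IsUnit ((-1 : ZMod N)^u) := (isUnit_one.neg).pow u
    rw [hneg.mul_right_eq_zero] at h0
    exact (ZMod.natCast_eq_zero_iff _ _).mp h0
  -- from N ∣ fib (v-u) with both < β conclude equality
  have hdiff : ∀ (u v : ℕ), u ≤ v → v - u < β → (N : ℕ) ∣ fib (v - u) → u = v := by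
    intro u v huv hlt hdvd
    rcases Nat.eq_zero_or_pos (v - u) with h0 | h0
    · omega
    · have := (rank_fib p α hp hodd hα0 hαdvd hαmin hWSS k (v - u) h0).mp hdvd
      have := Nat.le_of_dvd h0 this
      omega
  -- injectivity
  have hinj : Function.Injective f := by
    intro x y hxy
    rw [hf, Prod.ext_iff] at hxy
    obtain ⟨h1, h2⟩ := hxy
    simp only at h1 h2
    have hvx := ZMod.val_lt x.1
    have hvy := ZMod.val_lt y.1
    have hval : x.1.val = y.1.val := by
      rcases le_total x.1.val y.1.val with hle | hle
      · exact hdiff _ _ hle (by omega) (hcross _ _ hle x.2 y.2 h1 h2)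
      · exact (hdiff _ _ hle (by omega) (hcross _ _ hle y.2 x.2 h1.symm h2.symm)).symm
    rw [hval] at h1 h2
    have hux : x.2 = y.2 := by
      rcases hunim y.1.val with h | h
      · exact Units.ext ((h.mul_left_inj).mp h1)
      · exact Units.ext ((h.mul_left_inj).mp h2)
    have h1x : x.1 = y.1 := by
      have := congrArg (fun t : ℕ => (t : ZMod β)) hval
      simpa [ZMod.natCast_zmod_val] using this
    exact Prod.ext h1x hux
  -- target set
  set U : Finset (ZMod N × ZMod N) := univ.filter (fun ab => IsUnit ab.1 ∨ IsUnit ab.2) with hU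
  have hsub : (univ : Finset (ZMod β × (ZMod N)ˣ)).image f ⊆ U := by
    intro z hz
    rw [Finset.mem_image] at hz
    obtain ⟨x, _, rfl⟩ := hz
    rw [hU, Finset.mem_filter]
    refine ⟨Finset.mem_univ _, ?_⟩
    rcases hunim x.1.val with h | h
    · exact Or.inl ((Units.isUnit_units_mul x.2 _).mpr h)
    · exact Or.inr ((Units.isUnit_units_mul x.2 _).mpr h)
  -- cardinality of non-units
  set nonU : Finset (ZMod N) := univ.filter (fun x => ¬ IsUnit x) with hnonU
  have hnonU_card : nonU.card = p^k := by
    haveI : NeZero (p^k) := ⟨pow_ne_zero _ hppos.ne'⟩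
    have : (univ : Finset (ZMod (p^k))).card = nonU.card := by
      refine Finset.card_bij' (fun y _ => ((p * y.val : ℕ) : ZMod N))
        (fun x _ => ((x.val / p : ℕ) : ZMod (p^k))) ?_ ?_ ?_ ?_
      · intro y _
        rw [hnonU, Finset.mem_filter]
        refine ⟨Finset.mem_univ _, ?_⟩
        intro hy
        rw [ZMod.isUnit_iff_coprime] at hy
        have : p ∣ Nat.gcd (p * y.val) N := Nat.dvd_gcd (dvd_mul_right _ _) (dvd_pow_self _ (Nat.succ_ne_zero k))
        rw [Nat.Coprime] at hy
        rw [hy] at this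
        exact hp.ne_one (Nat.dvd_one.mp this)
      · intro x _; exact Finset.mem_univ _
      · intro y _
        have hlt : p * y.val < N := by
          have := ZMod.val_lt y
          calc p * y.val < p * p^k := (Nat.mul_lt_mul_left hppos).mpr this
          _ = N := by rw [hNdef]; ring
        show (((((p * y.val : ℕ) : ZMod N)).val / p : ℕ) : ZMod (p^k)) = y
        rw [ZMod.val_cast_of_lt hlt, Nat.mul_div_cancel_left _ hppos, ZMod.natCast_zmod_val]
      · intro x hx
        rw [hnonU, Finset.mem_filter] at hx
        have hdvd : p ∣ x.val := by
          by_contra hnd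
          exact hx.2 (by rw [← ZMod.natCast_zmod_val x]; exact hu x.val hnd)
        have hlt : x.val / p < p^k := by
          have := ZMod.val_lt x
          rw [Nat.div_lt_iff_lt_mul hppos]
          calc x.val < N := this
          _ = p^k * p := by rw [hNdef]; ring
        show ((p * (((x.val / p : ℕ) : ZMod (p^k))).val : ℕ) : ZMod N) = x
        rw [ZMod.val_cast_of_lt hlt, Nat.mul_div_cancel' hdvd, ZMod.natCast_zmod_val]
    rw [← this, Finset.card_univ, ZMod.card]
  have hsplit := Finset.card_filter_add_card_filter_not
    (s := (univ : Finset (ZMod N × ZMod N))) (fun ab => IsUnit ab.1 ∨ IsUnit ab.2)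
  rw [← hU] at hsplit
  have hnegset : (univ.filter fun ab : ZMod N × ZMod N => ¬(IsUnit ab.1 ∨ IsUnit ab.2))
      = nonU ×ˢ nonU := by
    rw [hnonU, ← Finset.univ_product_univ, ← Finset.filter_product]
    apply Finset.filter_congr
    intro x _
    simp [not_or]
  have hUcard : U.card + p^k * p^k = N * N := by
    have h1 : (nonU ×ˢ nonU).card = p^k * p^k := by rw [Finset.card_product, hnonU_card]
    have h2 : (univ : Finset (ZMod N × ZMod N)).card = N * N := by
      simp [ZMod.card]
    rw [← h1, ← h2, ← hnegset]
    exact hsplit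
  have htot : Nat.totient N = p^k * (p - 1) := by
    rw [hNdef, Nat.totient_prime_pow hp (Nat.succ_pos k)]
    simp
  have himgcard : ((univ : Finset (ZMod β × (ZMod N)ˣ)).image f).card = β * Nat.totient N := by
    rw [Finset.card_image_of_injective _ hinj, Finset.card_univ, Fintype.card_prod, ZMod.card,
      ZMod.card_units_eq_totient]
  have harith : β * Nat.totient N = N * N - p^k * p^k := by
    rw [htot, hBdef, hNdef, hα]
    have h1 : 1 ≤ p := hppos
    have hle : p^k * p^k ≤ p^(k+1) * p^(k+1) :=
      Nat.mul_le_mul (Nat.pow_le_pow_right hppos (by omega)) (Nat.pow_le_pow_right hppos (by omega))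
    zify [h1, hle]
    push_cast
    ring
  have hUeq : U.card = N * N - p^k * p^k := Nat.eq_sub_of_add_eq hUcard
  have hcardle : U.card ≤ ((univ : Finset (ZMod β × (ZMod N)ˣ)).image f).card := by
    rw [himgcard, harith, hUeq]
  have himg : (univ : Finset (ZMod β × (ZMod N)ˣ)).image f = U :=
    Finset.eq_of_subset_of_card_le hsub hcardle
  have hmem : (a, b) ∈ U := by rw [hU, Finset.mem_filter]; exact ⟨Finset.mem_univ _, hab⟩
  rw [← himg, Finset.mem_image] at hmem
  obtain ⟨x, _, hfx⟩ := hmem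
  rw [hf, Prod.ext_iff] at hfx
  simp only at hfx
  obtain ⟨h1, h2⟩ := hfx
  refine ⟨x.1.val, ↑x.2⁻¹, (x.2⁻¹).isUnit, ?_, ?_⟩
  · rw [← h1, Units.inv_mul_cancel_left]
  · rw [← h2, Units.inv_mul_cancel_left]

section C
variable {p : ℕ} [Fact p.Prime]

-- If the mod p^(k+1) class of `fib n` is a unit, its p-adic norm is 1.
lemma norm_fib_eq_one {k n : ℕ} (h : IsUnit ((fib n : ZMod (p^(k+1))))) :
    ‖(fib n : ℚ_[p])‖ = 1 ∧ (fib n : ℚ_[p]) ≠ 0 := by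
  have hp : p.Prime := Fact.out
  haveI : NeZero (p^(k+1)) := ⟨pow_ne_zero _ hp.pos.ne'⟩
  rw [ZMod.isUnit_iff_coprime] at h
  have hnd : ¬ p ∣ fib n := by
    intro hd
    have : p ∣ Nat.gcd (fib n) (p^(k+1)) := Nat.dvd_gcd hd (dvd_pow_self _ (Nat.succ_ne_zero k))
    rw [Nat.Coprime] at h
    rw [h] at this
    exact hp.ne_one (Nat.dvd_one.mp this)
  have hndZ : ¬ (p : ℤ) ∣ ((fib n : ℤ)) := by exact_mod_cast hnd
  have hle : ‖((fib n : ℤ) : ℚ_[p])‖ ≤ 1 := Padic.norm_int_le_one _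
  have hlt : ¬ ‖((fib n : ℤ) : ℚ_[p])‖ < 1 := fun hc => hndZ (Padic.norm_intCast_lt_one_iff.mp hc)
  have h1 : ‖((fib n : ℤ) : ℚ_[p])‖ = 1 := le_antisymm hle (not_lt.mp hlt)
  have hcast : ((fib n : ℤ) : ℚ_[p]) = (fib n : ℚ_[p]) := by push_cast; ring
  rw [hcast] at h1
  exact ⟨h1, fun h0 => by rw [h0] at h1; simp at h1⟩

-- key approximation lemma
lemma fib_ratio_approx (hodd : 3 ≤ p) (α : ℕ) (hα0 : 0 < α)
    (hαdvd : p ∣ fib α) (hαmin : ∀ m : ℕ, 0 < m → p ∣ fib m → α ≤ m)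
    (hWSS : ¬ p^2 ∣ fib α) (hα : α = p + 1) (k : ℕ) (x : ℚ_[p]) :
    ∃ n : ℕ, (fib n : ℚ_[p]) ≠ 0 ∧
      ‖(fib (n+1) : ℚ_[p]) / (fib n : ℚ_[p]) - x‖ ≤ ((p : ℝ))^(-(k+1 : ℕ) : ℤ) := by
  have hp : p.Prime := Fact.out
  haveI : NeZero (p^(k+1)) := ⟨pow_ne_zero _ hp.pos.ne'⟩
  rcases le_or_gt ‖x‖ 1 with hx1 | hx1
  · -- x is a p-adic integer
    set z : ℤ_[p] := ⟨x, hx1⟩ with hz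
    set c : ℕ := z.appr (k+1) with hc
    have happrox : ‖x - (c : ℚ_[p])‖ ≤ (p : ℝ)^(-(k+1 : ℕ) : ℤ) := by
      have h1 : ‖z - (c : ℤ_[p])‖ ≤ (p : ℝ)^(-(k+1 : ℕ) : ℤ) :=
        (PadicInt.norm_le_pow_iff_mem_span_pow _ _).mpr (PadicInt.appr_spec (k+1) z)
      have h2 : ((z - (c : ℤ_[p]) : ℤ_[p]) : ℚ_[p]) = x - (c : ℚ_[p]) := by
        push_cast
        rfl
      rw [← h2, PadicInt.padic_norm_e_of_padicInt]
      exact h1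
    obtain ⟨n, lam, hlam, h1, h2⟩ := fib_pair_surj p α hp hodd hα0 hαdvd hαmin hWSS hα k
      (1 : ZMod (p^(k+1))) ((c : ZMod (p^(k+1)))) (Or.inl isUnit_one)
    rw [mul_one] at h1
    have hfib := norm_fib_eq_one (p := p) (k := k) (n := n) (h1 ▸ hlam)
    have hdvd : ((p : ℤ))^(k+1) ∣ ((fib (n+1) : ℤ) - (c : ℤ) * (fib n : ℤ)) := by
      have h0 : (((fib (n+1) : ℤ) - (c : ℤ) * (fib n : ℤ) : ℤ) : ZMod (p^(k+1))) = 0 := by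
        push_cast
        rw [h1, h2]
        ring
      have := (ZMod.intCast_zmod_eq_zero_iff_dvd _ _).mp h0
      exact_mod_cast this
    have hnorm1 : ‖(fib (n+1) : ℚ_[p]) - (c : ℚ_[p]) * (fib n : ℚ_[p])‖ ≤ (p : ℝ)^(-(k+1 : ℕ) : ℤ) := by
      have := (Padic.norm_int_le_pow_iff_dvd (p := p) ((fib (n+1) : ℤ) - (c : ℤ) * (fib n : ℤ)) (k+1)).mpr hdvd
      have hcast : (((fib (n+1) : ℤ) - (c : ℤ) * (fib n : ℤ) : ℤ) : ℚ_[p])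
          = (fib (n+1) : ℚ_[p]) - (c : ℚ_[p]) * (fib n : ℚ_[p]) := by push_cast; ring
      rwa [hcast] at this
    refine ⟨n, hfib.2, ?_⟩
    have heq : (fib (n+1) : ℚ_[p]) / (fib n : ℚ_[p]) - x
        = ((fib (n+1) : ℚ_[p]) - (c : ℚ_[p]) * (fib n : ℚ_[p])) / (fib n : ℚ_[p])
          + ((c : ℚ_[p]) - x) := by
      have hne := hfib.2
      field_simp
      ring
    rw [heq]
    refine le_trans (Padic.nonarchimedean _ _) (max_le ?_ ?_)
    · rw [norm_div, hfib.1, div_one]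
      exact hnorm1
    · rw [norm_sub_rev] at happrox
      exact happrox
  · -- |x| > 1
    have hx0 : x ≠ 0 := by
      intro h0
      rw [h0, norm_zero] at hx1
      linarith
    have hval : ‖x‖ = (p : ℝ)^(-x.valuation) := Padic.norm_eq_zpow_neg_valuation hx0
    have hp1R : (1 : ℝ) < (p : ℝ) := by exact_mod_cast hp.one_lt
    have hmpos : 0 < -x.valuation := by
      by_contra hc
      push_neg at hc
      have : (p : ℝ)^(-x.valuation) ≤ 1 := zpow_le_one_of_nonpos₀ hp1R.le hc
      rw [← hval] at this
      linarith
    set j : ℕ := (-x.valuation).toNat with hj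
    have hjval : (j : ℤ) = -x.valuation := Int.toNat_of_nonneg hmpos.le
    have hxnorm : ‖x‖ = (p : ℝ)^(j : ℤ) := by rw [hval, hjval]
    have hy1 : ‖x⁻¹‖ ≤ 1 := by
      rw [norm_inv, hxnorm]
      rw [inv_le_one_iff₀]
      right
      exact one_le_zpow₀ hp1R.le (by positivity)
    set k' : ℕ := k + 2*j with hk'
    set z : ℤ_[p] := ⟨x⁻¹, hy1⟩ with hz
    set c : ℕ := z.appr (k'+1) with hc
    have happrox : ‖x⁻¹ - (c : ℚ_[p])‖ ≤ (p : ℝ)^(-(k'+1 : ℕ) : ℤ) := by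
      have h1 : ‖z - (c : ℤ_[p])‖ ≤ (p : ℝ)^(-(k'+1 : ℕ) : ℤ) :=
        (PadicInt.norm_le_pow_iff_mem_span_pow _ _).mpr (PadicInt.appr_spec (k'+1) z)
      have h2 : ((z - (c : ℤ_[p]) : ℤ_[p]) : ℚ_[p]) = x⁻¹ - (c : ℚ_[p]) := by
        push_cast
        rfl
      rw [← h2, PadicInt.padic_norm_e_of_padicInt]
      exact h1
    obtain ⟨n, lam, hlam, h1, h2⟩ := fib_pair_surj p α hp hodd hα0 hαdvd hαmin hWSS hα k'
      ((c : ZMod (p^(k'+1)))) (1 : ZMod (p^(k'+1))) (Or.inr isUnit_one)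
    rw [mul_one] at h2
    have hfib := norm_fib_eq_one (p := p) (k := k') (n := n+1) (h2 ▸ hlam)
    have hdvd : ((p : ℤ))^(k'+1) ∣ ((fib n : ℤ) - (c : ℤ) * (fib (n+1) : ℤ)) := by
      have h0 : (((fib n : ℤ) - (c : ℤ) * (fib (n+1) : ℤ) : ℤ) : ZMod (p^(k'+1))) = 0 := by
        push_cast
        rw [h1, h2]
        ring
      have := (ZMod.intCast_zmod_eq_zero_iff_dvd _ _).mp h0
      exact_mod_cast this
    have hnorm1 : ‖(fib n : ℚ_[p]) - (c : ℚ_[p]) * (fib (n+1) : ℚ_[p])‖ ≤ (p : ℝ)^(-(k'+1 : ℕ) : ℤ) := by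
      have := (Padic.norm_int_le_pow_iff_dvd (p := p) ((fib n : ℤ) - (c : ℤ) * (fib (n+1) : ℤ)) (k'+1)).mpr hdvd
      have hcast : (((fib n : ℤ) - (c : ℤ) * (fib (n+1) : ℤ) : ℤ) : ℚ_[p])
          = (fib n : ℚ_[p]) - (c : ℚ_[p]) * (fib (n+1) : ℚ_[p]) := by push_cast; ring
      rwa [hcast] at this
    set g : ℚ_[p] := (fib n : ℚ_[p]) / (fib (n+1) : ℚ_[p]) with hg
    have hgc : ‖g - (c : ℚ_[p])‖ ≤ (p : ℝ)^(-(k'+1 : ℕ) : ℤ) := by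
      have heq : g - (c : ℚ_[p])
          = ((fib n : ℚ_[p]) - (c : ℚ_[p]) * (fib (n+1) : ℚ_[p])) / (fib (n+1) : ℚ_[p]) := by
        rw [hg]; field_simp
      rw [heq, norm_div, hfib.1, div_one]
      exact hnorm1
    have hgy : ‖g - x⁻¹‖ ≤ (p : ℝ)^(-(k'+1 : ℕ) : ℤ) := by
      have heq : g - x⁻¹ = (g - (c : ℚ_[p])) + ((c : ℚ_[p]) - x⁻¹) := by ring
      rw [heq]
      refine le_trans (Padic.nonarchimedean _ _) (max_le hgc ?_)
      rw [norm_sub_rev] at happrox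
      exact happrox
    have hyj : ‖x⁻¹‖ = (p : ℝ)^(-(j : ℤ)) := by
      rw [norm_inv, hxnorm, ← zpow_neg]
    have hlt : ‖g - x⁻¹‖ < ‖x⁻¹‖ := by
      refine lt_of_le_of_lt hgy ?_
      rw [hyj]
      apply zpow_lt_zpow_right₀ hp1R
      omega
    have hgnorm : ‖g‖ = ‖x⁻¹‖ := by
      have hne : ‖g - x⁻¹‖ ≠ ‖x⁻¹‖ := ne_of_lt hlt
      have := Padic.add_eq_max_of_ne (q := g - x⁻¹) (r := x⁻¹) hne
      rw [sub_add_cancel] at this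
      rw [this]
      exact max_eq_right hlt.le
    have hg0 : g ≠ 0 := by
      intro h0
      rw [h0, norm_zero] at hgnorm
      have : ‖x⁻¹‖ > 0 := by rw [hyj]; positivity
      linarith
    have hfn0 : (fib n : ℚ_[p]) ≠ 0 := by
      intro h0
      apply hg0
      rw [hg, h0, zero_div]
    refine ⟨n, hfn0, ?_⟩
    have hratio : (fib (n+1) : ℚ_[p]) / (fib n : ℚ_[p]) = g⁻¹ := by
      rw [hg, inv_div]
    have hkey : g⁻¹ - x = -((g - x⁻¹) * x * g⁻¹) := by
      field_simp
      ring
    rw [hratio, hkey, norm_neg]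
    rw [norm_mul, norm_mul, norm_inv, hgnorm, hyj, hxnorm]
    rw [← zpow_neg, neg_neg]
    calc ‖g - x⁻¹‖ * (p:ℝ)^(j:ℤ) * (p:ℝ)^(j:ℤ)
        ≤ (p : ℝ)^(-(k'+1 : ℕ) : ℤ) * (p:ℝ)^(j:ℤ) * (p:ℝ)^(j:ℤ) := by
          have hpj : (0:ℝ) < (p:ℝ)^(j:ℤ) := by positivity
          gcongr
      _ = (p : ℝ)^(-(k+1 : ℕ) : ℤ) := by
          rw [← zpow_add₀ (by positivity : (p:ℝ) ≠ 0), ← zpow_add₀ (by positivity : (p:ℝ) ≠ 0)]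
          congr 1
          rw [hk']
          push_cast
          ring

end C



/-- The Kepler set of a sequence `a` in `ℚ_[p]`: the closure of the set of
consecutive ratios `a (n+1) / a n` over indices `n` with `a n ≠ 0`. -/
def keplerSet (p : ℕ) [Fact p.Prime] (a : ℕ → ℚ_[p]) : Set ℚ_[p] :=
  closure {x : ℚ_[p] | ∃ n : ℕ, a n ≠ 0 ∧ x = a (n + 1) / a n}

theorem stmt_19 (p : ℕ) [Fact p.Prime] (hp : 3 ≤ p)
    -- `α` is the rank of appearance of `p` in the Fibonacci sequence
    (α : ℕ) (hα0 : 0 < α) (hαdvd : p ∣ Nat.fib α)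
    (hαmin : ∀ m : ℕ, 0 < m → p ∣ Nat.fib m → α ≤ m)
    -- `p` is not a Wall–Sun–Sun prime
    (hWSS : ¬ p ^ 2 ∣ Nat.fib α)
    -- `α_F(p) = p + 1`
    (hα : α = p + 1) :
    keplerSet p (fun n => (Nat.fib n : ℚ_[p])) = Set.univ := by
  have hpp : p.Prime := Fact.out
  rw [keplerSet]
  apply Dense.closure_eq
  rw [Metric.dense_iff]
  intro x r hr
  have hp1R : (1:ℝ) < p := by exact_mod_cast hpp.one_lt
  have hinv : (p:ℝ)⁻¹ < 1 := by
    rw [inv_lt_one_iff₀]; right; exact hp1R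
  obtain ⟨k, hk⟩ := exists_pow_lt_of_lt_one hr hinv
  obtain ⟨n, hn0, hn⟩ := fib_ratio_approx hp α hα0 hαdvd hαmin hWSS hα k x
  refine ⟨(fib (n+1) : ℚ_[p]) / (fib n : ℚ_[p]), ?_, ⟨n, hn0, rfl⟩⟩
  rw [Metric.mem_ball, dist_eq_norm]
  have hbound : ((p : ℝ))^(-(k+1 : ℕ) : ℤ) < r := by
    have he : ((p : ℝ))^(-(k+1 : ℕ) : ℤ) = ((p:ℝ)⁻¹)^(k+1) := by
      rw [zpow_neg, zpow_natCast, inv_pow]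
    rw [he]
    calc ((p:ℝ)⁻¹)^(k+1) ≤ ((p:ℝ)⁻¹)^k := by
          apply pow_le_pow_of_le_one (by positivity) hinv.le (by omega)
      _ < r := hk
  exact lt_of_le_of_lt hn hbound
end
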